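/- arXiv:1804.09929 — 4 statements merged into one kernel-verified Lean document; each statement's English description precedes it below -/
import Mathlib

section
/- For every δ ∈ (0, 1/2), every interval of integers I = [N₁, N₂) of length L, and every index j such that q_{j+1} ≤ 2L, the number of integers n ∈ I with ‖n q_j α‖ ≤ δ satisfies Σ_{n=N₁}^{N₂-1} 1_{I_δ}({n q_j α}) ≤ 20·(δ + q_{j+1}^{-1})·L, where I_δ := [0, δ] ∪ [1−δ, 1] and {x} denotes the fractional part of x. -/
open MeasureTheory Filter
open scoped Classical

/-- The Gauss map. -/
noncomputable def gaussMap (x : ℝ) : ℝ := Int.fract x⁻¹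

/-- Partial quotients `a n` (`n ≥ 1`) of the continued fraction of `α ∈ (0,1)`:
`a n = ⌊1 / G^[n-1] α⌋`. -/
noncomputable def pquot (α : ℝ) : ℕ → ℕ
  | 0 => 0
  | n + 1 => ⌊(gaussMap^[n] α)⁻¹⌋.toNat

/-- Denominators `q n` of the convergents of the continued fraction of `α`:
`q 0 = 1`, `q 1 = a 1`, `q (n+2) = a (n+2) * q (n+1) + q n`. -/
noncomputable def cfDen (α : ℝ) : ℕ → ℕ
  | 0 => 1
  | 1 => pquot α 1
  | n + 2 => pquot α (n + 2) * cfDen α (n + 1) + cfDen α n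

/-- Ergodic (Birkhoff) sums `φ_N(x) = ∑_{j<N} φ(x + jα)` for the rotation by `α`. -/
noncomputable def birk (φ : ℝ → ℝ) (α : ℝ) (N : ℕ) (x : ℝ) : ℝ :=
  ∑ j ∈ Finset.range N, φ (x + j * α)

/-- Square of the L² norm on the circle `[0,1)`. -/
noncomputable def sqL2 (f : ℝ → ℝ) : ℝ := ∫ x in (0:ℝ)..1, (f x) ^ 2

/-- L² norm on the circle `[0,1)`. -/
noncomputable def normL2 (f : ℝ → ℝ) : ℝ := Real.sqrt (sqL2 f)

/-- Fourier coefficient `c_r(φ) = ∫₀¹ φ(x) e^{-2πirx} dx`. -/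
noncomputable def fCoeff (φ : ℝ → ℝ) (r : ℤ) : ℂ :=
  ∫ x in (0:ℝ)..1, (φ x : ℂ) * Complex.exp (-(2 * Real.pi * Complex.I * r * x))

/-- `γ_r(φ) = r · c_r(φ)`. -/
noncomputable def gam (φ : ℝ → ℝ) (r : ℤ) : ℂ := (r : ℂ) * fCoeff φ r

/-- `K(φ) = sup_{r ≠ 0} |γ_r(φ)|`. -/
noncomputable def Kc (φ : ℝ → ℝ) : ℝ :=
  ⨆ r : {r : ℤ // r ≠ 0}, ‖gam φ r.1‖

/-- Total variation of `f` on `[0,1)`. -/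
noncomputable def variation (f : ℝ → ℝ) : ℝ := (eVariationOn f (Set.Ico 0 1)).toReal

/-- The class 𝒞: 1-periodic, bounded variation on `[0,1)`, centered. -/
structure ClassC (φ : ℝ → ℝ) : Prop where
  periodic : Function.Periodic φ 1
  bv : BoundedVariationOn φ (Set.Ico 0 1)
  centered : (∫ x in (0:ℝ)..1, φ x) = 0

/-- Condition (H): a positive proportion of the `γ_{q_j}(φ)` stay bounded away from `0`. -/
def CondH (α : ℝ) (φ : ℝ → ℝ) : Prop :=
  ∃ N₀ : ℕ, ∃ η θ₀ : ℝ, 0 < N₀ ∧ 0 < η ∧ 0 < θ₀ ∧ ∀ N : ℕ, N₀ ≤ N →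
    θ₀ ≤ (((Finset.Icc 1 N).filter
      fun j => η ≤ ‖gam φ (cfDen α j : ℤ)‖).card : ℝ) / (N : ℝ)

/-- `m(n) = ℓ` iff `n ∈ [q_ℓ, q_{ℓ+1})`. -/
noncomputable def mIdx (α : ℝ) (n : ℕ) : ℕ := sSup {ℓ : ℕ | cfDen α ℓ ≤ n}

/-- Distance to the nearest integer. -/
noncomputable def nint (x : ℝ) : ℝ := |x - (round x : ℝ)|

/-- The standard normal cumulative distribution function. -/
noncomputable def stdNormalCDF (x : ℝ) : ℝ :=
  ∫ u in Set.Iic x, Real.exp (-(u ^ 2) / 2) / Real.sqrt (2 * Real.pi)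

/-- Kolmogorov distance between the distribution of `g` (as a random variable on the
circle `[0,1)` with Lebesgue measure) and the standard normal distribution. -/
noncomputable def kolDistN (g : ℝ → ℝ) : ℝ :=
  ⨆ x : ℝ, |(volume {t : ℝ | t ∈ Set.Ico (0:ℝ) 1 ∧ g t ≤ x}).toReal - stdNormalCDF x|

/-- Hypothesis (A): polynomially bounded partial quotients. -/
def HypA (α : ℝ) : Prop :=
  ∃ A p : ℝ, 1 ≤ A ∧ 0 ≤ p ∧ ∀ n : ℕ, 1 ≤ n → (pquot α n : ℝ) ≤ A * (n : ℝ) ^ p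

noncomputable def cfNum (α : ℝ) : ℕ → ℤ
  | 0 => 0
  | 1 => 1
  | n + 2 => (pquot α (n + 2) : ℤ) * cfNum α (n + 1) + cfNum α n

lemma gauss_step {x : ℝ} (hx : Irrational x) (hx01 : x ∈ Set.Ioo (0:ℝ) 1) :
    Irrational (gaussMap x) ∧ gaussMap x ∈ Set.Ioo (0:ℝ) 1 := by
  have hinv : Irrational x⁻¹ := hx.inv
  have hirr : Irrational (gaussMap x) := by
    unfold gaussMap
    rw [Int.fract]
    exact hinv.sub_intCast _
  refine ⟨hirr, ?_, ?_⟩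
  · rcases lt_or_eq_of_le (Int.fract_nonneg x⁻¹) with h | h
    · exact h
    · exact absurd (Rat.not_irrational 0) (by simpa [gaussMap, ← h] using hirr)
  · exact Int.fract_lt_one _

lemma iter_prop {α : ℝ} (hirr : Irrational α) (hmem : α ∈ Set.Ioo (0:ℝ) 1) :
    ∀ n, Irrational (gaussMap^[n] α) ∧ gaussMap^[n] α ∈ Set.Ioo (0:ℝ) 1 := by
  intro n
  induction n with
  | zero => exact ⟨hirr, hmem⟩
  | succ n ih =>
    rw [Function.iterate_succ_apply']
    exact gauss_step ih.1 ih.2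

lemma pquot_cast {α : ℝ} (hirr : Irrational α) (hmem : α ∈ Set.Ioo (0:ℝ) 1) (n : ℕ) :
    ((pquot α (n+1) : ℝ) = ⌊(gaussMap^[n] α)⁻¹⌋ ∧ 1 ≤ pquot α (n+1)) := by
  obtain ⟨h1, h2, h3⟩ := iter_prop hirr hmem n
  have hgt : 1 < (gaussMap^[n] α)⁻¹ := (one_lt_inv₀ h2).2 h3
  have hfl : 1 ≤ ⌊(gaussMap^[n] α)⁻¹⌋ := by
    have := Int.le_floor.2 (le_of_lt (by exact_mod_cast hgt : ((1:ℤ):ℝ) < _))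
    simpa using this
  constructor
  · show ((⌊(gaussMap^[n] α)⁻¹⌋.toNat : ℕ) : ℝ) = _
    exact_mod_cast congrArg (Int.cast : ℤ → ℝ) (Int.toNat_of_nonneg (by linarith))
  · show 1 ≤ ⌊(gaussMap^[n] α)⁻¹⌋.toNat
    omega

lemma key_rel {α : ℝ} (hirr : Irrational α) (hmem : α ∈ Set.Ioo (0:ℝ) 1) (n : ℕ) :
    (gaussMap^[n] α) * (gaussMap^[n+1] α) = 1 - (pquot α (n+1) : ℝ) * gaussMap^[n] α := by
  obtain ⟨h1, h2, h3⟩ := iter_prop hirr hmem n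
  have hne : gaussMap^[n] α ≠ 0 := ne_of_gt h2
  rw [Function.iterate_succ_apply', gaussMap, Int.fract, (pquot_cast hirr hmem n).1]
  field_simp

noncomputable def Pprod (α : ℝ) (n : ℕ) : ℝ := ∏ k ∈ Finset.range (n+1), gaussMap^[k] α

lemma Pprod_pos {α : ℝ} (hirr : Irrational α) (hmem : α ∈ Set.Ioo (0:ℝ) 1) (n : ℕ) :
    0 < Pprod α n :=
  Finset.prod_pos fun k _ => (iter_prop hirr hmem k).2.1

lemma Pprod_succ (α : ℝ) (n : ℕ) :
    Pprod α (n+1) = Pprod α n * gaussMap^[n+1] α := Finset.prod_range_succ _ _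

lemma Pprod_lt {α : ℝ} (hirr : Irrational α) (hmem : α ∈ Set.Ioo (0:ℝ) 1) (n : ℕ) :
    Pprod α (n+1) < Pprod α n := by
  rw [Pprod_succ]
  nlinarith [Pprod_pos hirr hmem n, (iter_prop hirr hmem (n+1)).2.1,
    (iter_prop hirr hmem (n+1)).2.2]

lemma cf_identity {α : ℝ} (hirr : Irrational α) (hmem : α ∈ Set.Ioo (0:ℝ) 1) :
    ∀ n, (cfDen α n : ℝ) * α - (cfNum α n : ℝ) = (-1)^n * Pprod α n := by
  have key : ∀ n, ((cfDen α n : ℝ) * α - (cfNum α n : ℝ) = (-1)^n * Pprod α n) ∧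
      ((cfDen α (n+1) : ℝ) * α - (cfNum α (n+1) : ℝ) = (-1)^(n+1) * Pprod α (n+1)) := by
    intro n
    induction n with
    | zero =>
      constructor
      · simp [cfDen, cfNum, Pprod]
      · have h0 := key_rel hirr hmem 0
        simp only [Function.iterate_zero_apply] at h0
        have hP : Pprod α 1 = α * gaussMap^[1] α := by
          simp [Pprod, Finset.prod_range_succ]
        have : (cfDen α 1 : ℝ) = (pquot α 1 : ℝ) := by norm_cast
        rw [this]
        simp only [cfNum]
        push_cast
        linear_combination hP + h0
    | succ n ih =>
      refine ⟨ih.2, ?_⟩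
      have hP : Pprod α (n+1+1) = Pprod α n - (pquot α (n+2) : ℝ) * Pprod α (n+1) := by
        have h1 := key_rel hirr hmem (n+1)
        calc Pprod α (n+1+1) = (Pprod α n * gaussMap^[n+1] α) * gaussMap^[n+2] α := by
              rw [Pprod_succ, Pprod_succ]
          _ = Pprod α n * (gaussMap^[n+1] α * gaussMap^[n+2] α) := by ring
          _ = Pprod α n * (1 - (pquot α (n+2) : ℝ) * gaussMap^[n+1] α) := by rw [h1]
          _ = Pprod α n - (pquot α (n+2) : ℝ) * Pprod α (n+1) := by
              rw [Pprod_succ]; ring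
      have hq : (cfDen α (n+2) : ℝ) = (pquot α (n+2) : ℝ) * (cfDen α (n+1) : ℝ) + (cfDen α n : ℝ) := by
        norm_cast
      have hp : (cfNum α (n+2) : ℝ) = (pquot α (n+2) : ℝ) * (cfNum α (n+1) : ℝ) + (cfNum α n : ℝ) := by
        norm_cast
      rw [hq, hp]
      linear_combination (pquot α (n+2) : ℝ) * ih.2 + ih.1 - (-1)^n * hP
  exact fun n => (key n).1

lemma cf_det (α : ℝ) : ∀ n,
    (cfDen α n : ℤ) * cfNum α (n+1) - (cfDen α (n+1) : ℤ) * cfNum α n = (-1)^n := by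
  intro n
  induction n with
  | zero => simp [cfDen, cfNum]
  | succ n ih =>
    have hq : (cfDen α (n+2) : ℤ) = (pquot α (n+2) : ℤ) * (cfDen α (n+1) : ℤ) + (cfDen α n : ℤ) := by
      norm_cast
    have hp : cfNum α (n+2) = (pquot α (n+2) : ℤ) * cfNum α (n+1) + cfNum α n := rfl
    rw [hq, hp]
    linear_combination (-1 : ℤ) * ih

lemma cfDen_one_le {α : ℝ} (hirr : Irrational α) (hmem : α ∈ Set.Ioo (0:ℝ) 1) :
    ∀ n, 1 ≤ cfDen α n := by
  have key : ∀ n, 1 ≤ cfDen α n ∧ 1 ≤ cfDen α (n+1) := by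
    intro n
    induction n with
    | zero =>
      refine ⟨le_refl _, ?_⟩
      show 1 ≤ pquot α 1
      exact (pquot_cast hirr hmem 0).2
    | succ n ih =>
      refine ⟨ih.2, ?_⟩
      show 1 ≤ pquot α (n+2) * cfDen α (n+1) + cfDen α n
      have := ih.1
      omega
  exact fun n => (key n).1

lemma cfDen_mono {α : ℝ} (hirr : Irrational α) (hmem : α ∈ Set.Ioo (0:ℝ) 1) (n : ℕ) :
    cfDen α n ≤ cfDen α (n+1) := by
  cases n with
  | zero =>
    show 1 ≤ pquot α 1
    exact (pquot_cast hirr hmem 0).2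
  | succ n =>
    show cfDen α (n+1) ≤ pquot α (n+2) * cfDen α (n+1) + cfDen α n
    have h1 := (pquot_cast hirr hmem (n+1)).2
    nlinarith [Nat.zero_le (cfDen α n)]

lemma Pprod_bounds {α : ℝ} (hirr : Irrational α) (hmem : α ∈ Set.Ioo (0:ℝ) 1) (n : ℕ) :
    1 < 2 * (cfDen α (n+1) : ℝ) * Pprod α n ∧ (cfDen α (n+1) : ℝ) * Pprod α n < 1 := by
  have h1 := cf_identity hirr hmem n
  have h2 := cf_identity hirr hmem (n+1)
  have hdet := cf_det α n
  have hsum : (cfDen α (n+1) : ℝ) * Pprod α n + (cfDen α n : ℝ) * Pprod α (n+1) = 1 := by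
    have hdetR : (cfDen α n : ℝ) * (cfNum α (n+1) : ℝ) - (cfDen α (n+1) : ℝ) * (cfNum α n : ℝ)
        = (-1)^n := by exact_mod_cast congrArg (Int.cast : ℤ → ℝ) hdet
    have key : (-1:ℝ)^n * ((cfDen α (n+1) : ℝ) * Pprod α n + (cfDen α n : ℝ) * Pprod α (n+1))
        = (-1:ℝ)^n := by
      linear_combination (cfDen α n : ℝ) * h2 - (cfDen α (n+1) : ℝ) * h1 + hdetR
    have hne : ((-1:ℝ)^n) ≠ 0 := by
      rcases Nat.even_or_odd n with h | h
      · rw [h.neg_one_pow]; norm_num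
      · rw [h.neg_one_pow]; norm_num
    exact mul_left_cancel₀ hne (key.trans (mul_one _).symm)
  have hPpos := Pprod_pos hirr hmem n
  have hPpos' := Pprod_pos hirr hmem (n+1)
  have hPlt := Pprod_lt hirr hmem n
  have hqpos : (0:ℝ) < (cfDen α n : ℝ) := by
    exact_mod_cast Nat.lt_of_lt_of_le Nat.zero_lt_one (cfDen_one_le hirr hmem n)
  have hqmono : (cfDen α n : ℝ) ≤ (cfDen α (n+1) : ℝ) := by
    exact_mod_cast cfDen_mono hirr hmem n
  constructor
  · nlinarith
  · nlinarith

lemma round_eq_of_abs_le {z : ℝ} {m : ℤ} {δ : ℝ} (hδ : δ < 1/2) (h : |z - m| ≤ δ) :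
    round z = m := by
  rw [abs_le] at h
  rw [round_eq, Int.floor_eq_iff]
  constructor
  · push_cast; linarith [h.1]
  · push_cast; linarith [h.2]

lemma count_lemma {ε δ : ℝ} (hε : 0 < ε) (hδ0 : 0 ≤ δ) (hδ1 : 2*δ ≤ 1)
    {N₁ N₂ : ℕ} (hN : N₁ < N₂) (B : Finset ℕ) (hB : B ⊆ Finset.Ico N₁ N₂)
    (hround : ∀ n ∈ B, |(n:ℝ)*ε - (round ((n:ℝ)*ε) : ℤ)| ≤ δ) :
    (B.card : ℝ) ≤ (((N₂ - N₁ : ℕ):ℝ)*ε + 2) * (2*δ/ε + 1) := by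
  set f : ℕ → ℤ := fun n => round ((n:ℝ)*ε) with hf
  set m₁ : ℤ := ⌈(N₁:ℝ)*ε - δ⌉ with hm₁def
  set m₂ : ℤ := ⌊((N₂:ℝ)-1)*ε + δ⌋ with hm₂def
  set M : Finset ℤ := Finset.Icc m₁ m₂ with hMdef
  set K : ℕ := ⌊2*δ/ε⌋.toNat with hKdef
  have habs : ∀ n ∈ B, |(n:ℝ)*ε - (f n : ℝ)| ≤ δ := hround
  have hmemM : ∀ n ∈ B, f n ∈ M := by
    intro n hn
    have hr := habs n hn
    have hn' := hB hn
    rw [Finset.mem_Ico] at hn'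
    have h1 : (N₁:ℝ) ≤ (n:ℝ) := by exact_mod_cast hn'.1
    have h2 : (n:ℝ) ≤ (N₂:ℝ) - 1 := by
      have h3 : n + 1 ≤ N₂ := hn'.2
      have h4 := (Nat.cast_le (α := ℝ)).2 h3
      push_cast at h4; linarith
    rw [abs_le] at hr
    rw [hMdef, Finset.mem_Icc]
    constructor
    · apply Int.ceil_le.2
      have : (N₁:ℝ)*ε - δ ≤ (n:ℝ)*ε - δ := by nlinarith
      linarith [hr.2]
    · apply Int.le_floor.2
      have : (n:ℝ)*ε + δ ≤ ((N₂:ℝ)-1)*ε + δ := by nlinarith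
      linarith [hr.1]
  have hcard : B.card = ∑ m ∈ M, (B.filter fun n => f n = m).card :=
    Finset.card_eq_sum_card_fiberwise hmemM
  have hK0 : (0:ℤ) ≤ ⌊2*δ/ε⌋ := Int.floor_nonneg.2 (by positivity)
  have hfiber : ∀ m ∈ M, (B.filter fun n => f n = m).card ≤ K + 1 := by
    intro m _
    set F := B.filter fun n => f n = m with hFdef
    rcases F.eq_empty_or_nonempty with hFe | hFne
    · simp [hFe]
    · have haF := F.min'_mem hFne
      set a := F.min' hFne with hadef
      have hsub : F ⊆ Finset.Icc a (a + K) := by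
        intro n hn
        rw [Finset.mem_Icc]
        have hna : a ≤ n := F.min'_le n hn
        refine ⟨hna, ?_⟩
        have hbn : |(n:ℝ)*ε - (m:ℝ)| ≤ δ := by
          have h := habs n (Finset.mem_filter.1 hn).1
          rwa [(Finset.mem_filter.1 hn).2] at h
        have hba : |(a:ℝ)*ε - (m:ℝ)| ≤ δ := by
          have h := habs a (Finset.mem_filter.1 haF).1
          rwa [(Finset.mem_filter.1 haF).2] at h
        have key : ((n - a : ℕ):ℝ) * ε ≤ 2*δ := by
          rw [Nat.cast_sub hna]
          rw [abs_le] at hbn hba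
          nlinarith
        have key2 : ((n - a : ℕ):ℝ) ≤ 2*δ/ε := by
          rw [le_div_iff₀ hε]; exact key
        have key3 : (n - a : ℕ) ≤ K := by
          rw [hKdef, Int.le_toNat hK0]
          exact Int.le_floor.2 (by exact_mod_cast key2)
        omega
      calc F.card ≤ (Finset.Icc a (a+K)).card := Finset.card_le_card hsub
        _ = K + 1 := by rw [Nat.card_Icc]; omega
  have hBM : B.card ≤ M.card * (K + 1) := by
    rw [hcard]
    calc ∑ m ∈ M, (B.filter fun n => f n = m).card ≤ ∑ _m ∈ M, (K+1) :=
          Finset.sum_le_sum hfiber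
      _ = M.card * (K+1) := by rw [Finset.sum_const, smul_eq_mul]
  have hL : ((N₂ - N₁:ℕ):ℝ) = (N₂:ℝ) - N₁ := by
    rw [Nat.cast_sub (le_of_lt hN)]
  have hMcard : (M.card : ℝ) ≤ ((N₂ - N₁ : ℕ):ℝ)*ε + 2 := by
    have hc : M.card = (m₂ + 1 - m₁).toNat := Int.card_Icc m₁ m₂
    rcases le_or_gt (m₂ + 1 - m₁) 0 with h | h
    · rw [hc, Int.toNat_of_nonpos h]
      have : (0:ℝ) ≤ ((N₂ - N₁ : ℕ):ℝ)*ε := by positivity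
      push_cast
      linarith
    · have hcz : (M.card : ℤ) = m₂ + 1 - m₁ := by rw [hc, Int.toNat_of_nonneg (le_of_lt h)]
      have hreal : (M.card : ℝ) = (m₂:ℝ) + 1 - (m₁:ℝ) := by exact_mod_cast hcz
      have hm2 : (m₂:ℝ) ≤ ((N₂:ℝ)-1)*ε + δ := Int.floor_le _
      have hm1 : (N₁:ℝ)*ε - δ ≤ (m₁:ℝ) := Int.le_ceil _
      rw [hreal, hL]
      nlinarith
  have hKb : ((K:ℕ):ℝ) + 1 ≤ 2*δ/ε + 1 := by
    have h1 : ((K:ℕ):ℝ) = ((⌊2*δ/ε⌋ : ℤ):ℝ) := by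
      rw [hKdef]
      exact_mod_cast congrArg (Int.cast : ℤ → ℝ) (Int.toNat_of_nonneg hK0)
    rw [h1]
    linarith [Int.floor_le (2*δ/ε)]
  calc (B.card:ℝ) ≤ (M.card:ℝ) * ((K:ℕ) + 1 : ℝ) := by exact_mod_cast hBM
    _ ≤ (((N₂ - N₁ : ℕ):ℝ)*ε + 2) * (2*δ/ε + 1) := by
        apply mul_le_mul hMcard hKb (by positivity) ?_
        have : (0:ℝ) ≤ ((N₂ - N₁ : ℕ):ℝ)*ε := by positivity
        linarith


set_option maxHeartbeats 1000000 in
/-- counting `n` in an interval with `{n q_j α}` close to `0` or `1`. -/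
theorem stmt2 (α : ℝ) (hirr : Irrational α) (hmem : α ∈ Set.Ioo (0:ℝ) 1)
    (δ : ℝ) (hδ : δ ∈ Set.Ioo (0:ℝ) (1/2))
    (N₁ N₂ j : ℕ) (hj : cfDen α (j + 1) ≤ 2 * (N₂ - N₁)) :
    (((Finset.Ico N₁ N₂).filter fun n =>
        Int.fract (((n * cfDen α j : ℕ) : ℝ) * α) ≤ δ ∨
          1 - δ ≤ Int.fract (((n * cfDen α j : ℕ) : ℝ) * α)).card : ℝ)
      ≤ 20 * (δ + ((cfDen α (j + 1) : ℝ))⁻¹) * ((N₂ - N₁ : ℕ) : ℝ) := by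
  obtain ⟨hδ0, hδh⟩ := hδ
  have hq'1 : 1 ≤ cfDen α (j+1) := cfDen_one_le hirr hmem (j+1)
  have hN : N₁ < N₂ := by omega
  have hεpos : 0 < Pprod α j := Pprod_pos hirr hmem j
  obtain ⟨hlow, hupp⟩ := Pprod_bounds hirr hmem j
  have hid := cf_identity hirr hmem j
  have hround : ∀ n ∈ (Finset.Ico N₁ N₂).filter fun n =>
      Int.fract (((n * cfDen α j : ℕ) : ℝ) * α) ≤ δ ∨
        1 - δ ≤ Int.fract (((n * cfDen α j : ℕ) : ℝ) * α),
      |(n:ℝ) * Pprod α j - (round ((n:ℝ) * Pprod α j) : ℤ)| ≤ δ := by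
    intro n hn
    have hC := (Finset.mem_filter.1 hn).2
    have hy : (((n * cfDen α j : ℕ) : ℝ) * α)
        = (n:ℝ) * ((-1)^j * Pprod α j) + ((n : ℤ) * cfNum α j : ℤ) := by
      push_cast
      linear_combination (n:ℝ) * hid
    rw [hy, Int.fract_add_intCast] at hC
    set y := (n:ℝ) * ((-1)^j * Pprod α j) with hydef
    have hm : ∃ m : ℤ, |y - (m:ℝ)| ≤ δ := by
      rcases hC with h | h
      · refine ⟨⌊y⌋, ?_⟩
        rw [Int.self_sub_floor, abs_of_nonneg (Int.fract_nonneg y)]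
        exact h
      · refine ⟨⌊y⌋ + 1, ?_⟩
        have h1 : y - (⌊y⌋ + 1 : ℤ) = Int.fract y - 1 := by
          rw [Int.fract]; push_cast; ring
        rw [h1, abs_of_nonpos (by linarith [Int.fract_lt_one y])]
        linarith
    obtain ⟨m, hm⟩ := hm
    have hm' : ∃ m' : ℤ, |(n:ℝ) * Pprod α j - (m':ℝ)| ≤ δ := by
      rcases Nat.even_or_odd j with hpar | hpar
      · refine ⟨m, ?_⟩
        have : y = (n:ℝ) * Pprod α j := by rw [hydef, hpar.neg_one_pow]; ring
        rwa [this] at hm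
      · refine ⟨-m, ?_⟩
        have h2 : y = -((n:ℝ) * Pprod α j) := by rw [hydef, hpar.neg_one_pow]; ring
        rw [h2] at hm
        have h3 : -((n:ℝ) * Pprod α j) - (m:ℝ) = -((n:ℝ) * Pprod α j - ((-m : ℤ):ℝ)) := by
          push_cast; ring
        rw [h3, abs_neg] at hm
        exact hm
    obtain ⟨m', hm'⟩ := hm'
    rwa [round_eq_of_abs_le hδh hm']
  have hcount := count_lemma hεpos (le_of_lt hδ0) (by linarith) hN _
    (Finset.filter_subset _ _) hround
  refine le_trans hcount ?_
  -- arithmetic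
  set L : ℝ := ((N₂ - N₁ : ℕ) : ℝ) with hLdef
  set Q : ℝ := ((cfDen α (j+1) : ℕ) : ℝ) with hQdef
  set e : ℝ := Pprod α j with hedef
  have hQpos : (0:ℝ) < Q := by rw [hQdef]; exact_mod_cast hq'1
  have hiq : Q * Q⁻¹ = 1 := mul_inv_cancel₀ (ne_of_gt hQpos)
  have hiqpos : (0:ℝ) < Q⁻¹ := inv_pos.2 hQpos
  have hQL : Q ≤ 2 * L := by
    rw [hQdef, hLdef]
    exact_mod_cast hj
  have hL1 : (1:ℝ) ≤ L := by
    rw [hLdef]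
    have : 1 ≤ N₂ - N₁ := by omega
    exact_mod_cast this
  have hee : e * e⁻¹ = 1 := mul_inv_cancel₀ (ne_of_gt hεpos)
  have heipos : (0:ℝ) < e⁻¹ := inv_pos.2 hεpos
  have hε_lt : e < Q⁻¹ := by
    nlinarith
  have h2Liq : 1 ≤ 2 * L * Q⁻¹ := by
    nlinarith
  have hinv_lt : e⁻¹ < 2 * Q := by
    nlinarith
  have hiqe : Q⁻¹ * e⁻¹ ≤ 2 := by
    nlinarith
  have hdiv : 2 * δ / e = 2 * δ * e⁻¹ := div_eq_mul_inv _ _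
  rw [hdiv]
  have hA : L * e + 2 ≤ 5 * (L * Q⁻¹) := by
    nlinarith
  have hstep : (L * e + 2) * (2 * δ * e⁻¹ + 1) ≤ 5 * (L * Q⁻¹) * (2 * δ * e⁻¹ + 1) :=
    mul_le_mul_of_nonneg_right hA (by positivity)
  refine le_trans hstep ?_
  have hstep2 : (10 * δ * L) * (Q⁻¹ * e⁻¹) ≤ (10 * δ * L) * 2 :=
    mul_le_mul_of_nonneg_left hiqe (by positivity)
  nlinarith [mul_nonneg (le_of_lt hδ0) (by positivity : (0:ℝ) ≤ L),
    mul_nonneg (le_of_lt hiqpos) (by positivity : (0:ℝ) ≤ L)]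
end

section
/- Let Λ be a compact topological space and let (F_λ)_{λ∈Λ} be a family of nonnegative continuous functions on the torus 𝕋^d, none identically zero, depending continuously on λ (i.e. (λ, u) ↦ F_λ(u) is continuous). If a sequence (z_n) is equidistributed in 𝕋^d, then there exist N₀ ∈ ℕ and η, θ > 0 such that Card{n ≤ N : F_λ(z_n) ≥ η} ≥ θ·N for all N ≥ N₀ and all λ ∈ Λ. -/
open MeasureTheory Filter
open scoped Classical

/-- uniform positive proportion of visits of an equidistributed sequence
to the set where `F_λ` is bounded away from zero, over a compact parameter space. -/
theorem stmt14 (d : ℕ) {Λ : Type*} [TopologicalSpace Λ] [CompactSpace Λ]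
    (F : Λ → (Fin d → AddCircle (1:ℝ)) → ℝ)
    (hFcont : Continuous fun p : Λ × (Fin d → AddCircle (1:ℝ)) => F p.1 p.2)
    (hFnonneg : ∀ lam u, 0 ≤ F lam u)
    (hFne : ∀ lam, ∃ u, F lam u ≠ 0)
    (z : ℕ → (Fin d → AddCircle (1:ℝ)))
    (hz : ∀ g : (Fin d → AddCircle (1:ℝ)) → ℝ, Continuous g →
      Filter.Tendsto (fun N : ℕ => (∑ n ∈ Finset.Icc 1 N, g (z n)) / (N : ℝ))
        Filter.atTop (nhds (∫ u, g u))) :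
    ∃ N₀ : ℕ, ∃ η θ : ℝ, 0 < η ∧ 0 < θ ∧
      ∀ N : ℕ, N₀ ≤ N → ∀ lam : Λ,
        θ * (N : ℝ) ≤ (((Finset.Icc 1 N).filter fun n => η ≤ F lam (z n)).card : ℝ) := by
    classical
  rcases isEmpty_or_nonempty Λ with hΛ | hΛ
  · exact ⟨0, 1, 1, one_pos, one_pos, fun N _ lam => (hΛ.false lam).elim⟩
  have hFc : ∀ lam, Continuous (F lam) := fun lam => hFcont.comp (Continuous.prodMk_right lam)
  have hIntF : ∀ lam, Integrable (F lam) := fun lam =>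
    (hFc lam).integrable_of_hasCompactSupport (HasCompactSupport.of_compactSpace _)
  set I : Λ → ℝ := fun lam => ∫ u, F lam u with hIdef
  have hIpos : ∀ lam, 0 < I lam := by
    intro lam
    rw [hIdef]
    rw [integral_pos_iff_support_of_nonneg_ae (Filter.Eventually.of_forall (hFnonneg lam))
      (hIntF lam)]
    exact ((hFc lam).isOpen_support).measure_pos _ (hFne lam)
  -- sup bound M
  obtain ⟨pm, -, hpm⟩ := isCompact_univ.exists_isMaxOn (Set.univ_nonempty)
    (hFcont.continuousOn (s := (Set.univ : Set (Λ × (Fin d → AddCircle (1:ℝ))))))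
  set M : ℝ := max (F pm.1 pm.2) 1 with hMdef
  have hM1 : (1:ℝ) ≤ M := le_max_right _ _
  have hMpos : (0:ℝ) < M := lt_of_lt_of_le one_pos hM1
  have hFM : ∀ lam u, F lam u ≤ M :=
    fun lam u => le_trans (hpm (Set.mem_univ (lam, u))) (le_max_left _ _)
  -- curried continuous map
  set G : C(Λ, C(Fin d → AddCircle (1:ℝ), ℝ)) := ContinuousMap.curry ⟨_, hFcont⟩ with hGdef
  have hGapp : ∀ lam u, G lam u = F lam u := fun lam u => rfl
  -- covering
  set U : Λ → Set Λ := fun i => {lam | dist (G lam) (G i) < I i / 6} with hUdef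
  have hUopen : ∀ i, IsOpen (U i) :=
    fun i => isOpen_lt (G.continuous.dist continuous_const) continuous_const
  have hUmem : ∀ i, i ∈ U i := by
    intro i; simp only [hUdef, Set.mem_setOf_eq, dist_self]
    exact div_pos (hIpos i) (by norm_num)
  obtain ⟨t, hcov⟩ := isCompact_univ.elim_finite_subcover U hUopen
    (fun lam _ => Set.mem_iUnion.2 ⟨lam, hUmem lam⟩)
  have ht : t.Nonempty := by
    obtain ⟨i, hi, -⟩ := Set.mem_iUnion₂.1 (hcov (Set.mem_univ hΛ.some))
    exact ⟨i, hi⟩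
  -- equidistribution thresholds
  have hNl : ∀ lam : Λ, ∃ Nl : ℕ, ∀ N ≥ Nl,
      |(∑ n ∈ Finset.Icc 1 N, F lam (z n)) / (N : ℝ) - I lam| < I lam / 6 := by
    intro lam
    obtain ⟨Nl, h⟩ := Metric.tendsto_atTop.1 (hz (F lam) (hFc lam)) (I lam / 6)
      (div_pos (hIpos lam) (by norm_num))
    exact ⟨Nl, fun N hN => by simpa [Real.dist_eq] using h N hN⟩
  set Nfun : Λ → ℕ := fun lam => (hNl lam).choose with hNfun
  refine ⟨max 1 (t.sup Nfun), t.inf' ht (fun i => I i / 6), t.inf' ht (fun i => I i / (2*M)),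
    ?_, ?_, ?_⟩
  · exact (Finset.lt_inf'_iff _).2 fun i _ => div_pos (hIpos i) (by norm_num)
  · exact (Finset.lt_inf'_iff _).2 fun i _ => div_pos (hIpos i) (by positivity)
  intro N hN lam
  set η := t.inf' ht (fun i => I i / 6) with hη
  set θ := t.inf' ht (fun i => I i / (2*M)) with hθ
  obtain ⟨i, hit, hlamU⟩ := Set.mem_iUnion₂.1 (hcov (Set.mem_univ lam))
  have hN1 : 1 ≤ N := le_trans (le_max_left _ _) hN
  have hNpos : (0:ℝ) < N := by exact_mod_cast hN1
  have hNi : Nfun i ≤ N := le_trans (le_trans (Finset.le_sup hit) (le_max_right _ _)) hN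
  -- (1) sum for F i
  have h1 : (I i - I i / 6) * N ≤ ∑ n ∈ Finset.Icc 1 N, F i (z n) := by
    have := (hNl i).choose_spec N hNi
    have h' := (abs_lt.1 this).1
    have : I i - I i / 6 < (∑ n ∈ Finset.Icc 1 N, F i (z n)) / (N : ℝ) := by linarith
    calc (I i - I i / 6) * N ≤ ((∑ n ∈ Finset.Icc 1 N, F i (z n)) / (N : ℝ)) * N :=
          mul_le_mul_of_nonneg_right this.le hNpos.le
      _ = ∑ n ∈ Finset.Icc 1 N, F i (z n) := by field_simp
  -- (2) pointwise comparison
  have h2 : ∀ u, F i u - I i / 6 ≤ F lam u := by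
    intro u
    have hd : dist (F lam u) (F i u) ≤ dist (G lam) (G i) := by
      simpa [hGapp] using ContinuousMap.dist_apply_le_dist (f := G lam) (g := G i) u
    have := lt_of_le_of_lt hd hlamU
    have := abs_lt.1 (by simpa [Real.dist_eq] using this)
    linarith [this.1]
  have h2' : (I i - 2 * (I i / 6)) * N ≤ ∑ n ∈ Finset.Icc 1 N, F lam (z n) := by
    have : ∑ n ∈ Finset.Icc 1 N, (F i (z n) - I i / 6) ≤ ∑ n ∈ Finset.Icc 1 N, F lam (z n) :=
      Finset.sum_le_sum fun n _ => h2 (z n)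
    rw [Finset.sum_sub_distrib, Finset.sum_const, Nat.card_Icc] at this
    simp only [Nat.add_sub_cancel, nsmul_eq_mul] at this
    nlinarith [h1]
  -- (3) counting
  set s := (Finset.Icc 1 N).filter fun n => η ≤ F lam (z n) with hs
  have h3 : ∑ n ∈ Finset.Icc 1 N, F lam (z n) ≤ M * s.card + η * N := by
    rw [← Finset.sum_filter_add_sum_filter_not (Finset.Icc 1 N) (fun n => η ≤ F lam (z n))]
    have hA : ∑ n ∈ s, F lam (z n) ≤ M * s.card := by
      calc ∑ n ∈ s, F lam (z n) ≤ ∑ n ∈ s, M := Finset.sum_le_sum fun n _ => hFM lam (z n)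
        _ = M * s.card := by rw [Finset.sum_const, nsmul_eq_mul, mul_comm]
    have hB : ∑ n ∈ (Finset.Icc 1 N).filter (fun n => ¬ η ≤ F lam (z n)), F lam (z n)
        ≤ η * N := by
      calc ∑ n ∈ (Finset.Icc 1 N).filter (fun n => ¬ η ≤ F lam (z n)), F lam (z n)
          ≤ ∑ n ∈ (Finset.Icc 1 N).filter (fun n => ¬ η ≤ F lam (z n)), η :=
            Finset.sum_le_sum fun n hn => (not_le.1 (Finset.mem_filter.1 hn).2).le
        _ = η * ((Finset.Icc 1 N).filter (fun n => ¬ η ≤ F lam (z n))).card := by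
            rw [Finset.sum_const, nsmul_eq_mul, mul_comm]
        _ ≤ η * N := by
            have hcard : ((Finset.Icc 1 N).filter (fun n => ¬ η ≤ F lam (z n))).card ≤ N := by
              calc _ ≤ (Finset.Icc 1 N).card := Finset.card_filter_le _ _
                _ = N := by rw [Nat.card_Icc]; omega
            have hη0 : 0 ≤ η :=
              le_of_lt ((Finset.lt_inf'_iff _).2 fun i _ => div_pos (hIpos i) (by norm_num))
            exact mul_le_mul_of_nonneg_left (by exact_mod_cast hcard) hη0
    linarith
  -- (4) combine
  have hηi : η ≤ I i / 6 := Finset.inf'_le _ hit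
  have hθi : θ ≤ I i / (2*M) := Finset.inf'_le _ hit
  have h4 : (I i / 2) * N ≤ M * s.card := by nlinarith
  have h5 : θ * N ≤ (I i / (2*M)) * N := mul_le_mul_of_nonneg_right hθi hNpos.le
  have h6 : (I i / (2*M)) * N ≤ s.card := by
    rw [div_mul_eq_mul_div, div_le_iff₀ (by positivity : (0:ℝ) < 2*M)]
    nlinarith [h4]
  linarith
end

section
/- There is an absolute constant C such that for every irrational α and all indices n ≤ ℓ, Σ_{|j| ≥ q_ℓ, j≠0} (1/j²)·(‖q_n j α‖²/‖j α‖²) ≤ C·q_n/q_ℓ, where q_n and q_ℓ are denominators of α. -/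
open MeasureTheory Filter
open scoped Classical

namespace Stmt16Aux

noncomputable def cfNum (α : ℝ) : ℕ → ℕ
  | 0 => 0
  | 1 => 1
  | n + 2 => pquot α (n + 2) * cfNum α (n + 1) + cfNum α n

noncomputable def cfT (α : ℝ) (k : ℕ) : ℝ := gaussMap^[k] α

noncomputable def cfB (α : ℝ) (k : ℕ) : ℝ := ∏ i ∈ Finset.range (k + 1), cfT α i

variable {α : ℝ}

lemma cfT_zero : cfT α 0 = α := rfl

lemma cfT_succ (k : ℕ) : cfT α (k + 1) = Int.fract (cfT α k)⁻¹ := by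
  rw [cfT, Function.iterate_succ_apply']; rfl

lemma cfT_prop (hirr : Irrational α) (hα : α ∈ Set.Ioo (0:ℝ) 1) (k : ℕ) :
    Irrational (cfT α k) ∧ cfT α k ∈ Set.Ioo (0:ℝ) 1 := by
  induction k with
  | zero => exact ⟨hirr, hα⟩
  | succ k ih =>
    obtain ⟨h1, h2, h3⟩ := ih
    have hfr : Irrational (Int.fract (cfT α k)⁻¹) := by
      rw [← Int.self_sub_floor]
      exact h1.inv.sub_intCast _
    rw [cfT_succ]
    refine ⟨hfr, lt_of_le_of_ne (Int.fract_nonneg _) ?_, Int.fract_lt_one _⟩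
    intro h
    exact (Int.not_irrational 0) (by simpa [← h] using hfr)

lemma pquot_succ (k : ℕ) : pquot α (k + 1) = ⌊(cfT α k)⁻¹⌋.toNat := rfl

lemma one_lt_inv_cfT (hirr : Irrational α) (hα : α ∈ Set.Ioo (0:ℝ) 1) (k : ℕ) :
    1 < (cfT α k)⁻¹ := by
  obtain ⟨_, h2, h3⟩ := cfT_prop hirr hα k
  exact (one_lt_inv₀ h2).2 h3

lemma pquot_cast (hirr : Irrational α) (hα : α ∈ Set.Ioo (0:ℝ) 1) (k : ℕ) :
    (pquot α (k + 1) : ℝ) = ⌊(cfT α k)⁻¹⌋ := by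
  rw [pquot_succ]
  have h1 : (1:ℤ) ≤ ⌊(cfT α k)⁻¹⌋ := by
    exact_mod_cast Int.le_floor.2 (by exact_mod_cast (one_lt_inv_cfT hirr hα k).le)
  have h2 : (⌊(cfT α k)⁻¹⌋.toNat : ℤ) = ⌊(cfT α k)⁻¹⌋ := Int.toNat_of_nonneg (by linarith)
  exact_mod_cast h2

lemma one_le_pquot (hirr : Irrational α) (hα : α ∈ Set.Ioo (0:ℝ) 1) (k : ℕ) :
    1 ≤ pquot α (k + 1) := by
  have := pquot_cast hirr hα k
  have h1 : (1:ℤ) ≤ ⌊(cfT α k)⁻¹⌋ := Int.le_floor.2 (by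
    exact_mod_cast (one_lt_inv_cfT hirr hα k).le)
  have : (1:ℝ) ≤ (pquot α (k+1) : ℝ) := by rw [this]; exact_mod_cast h1
  exact_mod_cast this

lemma cfT_inv_eq (hirr : Irrational α) (hα : α ∈ Set.Ioo (0:ℝ) 1) (k : ℕ) :
    (cfT α k)⁻¹ = (pquot α (k + 1) : ℝ) + cfT α (k + 1) := by
  rw [cfT_succ, pquot_cast hirr hα k, Int.fract]
  ring

lemma cfB_zero : cfB α 0 = α := by simp [cfB, cfT_zero]

lemma cfB_succ (k : ℕ) : cfB α (k + 1) = cfB α k * cfT α (k + 1) :=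
  Finset.prod_range_succ _ _

lemma cfB_pos (hirr : Irrational α) (hα : α ∈ Set.Ioo (0:ℝ) 1) (k : ℕ) :
    0 < cfB α k :=
  Finset.prod_pos fun i _ => (cfT_prop hirr hα i).2.1

lemma cfB_lt_one (hirr : Irrational α) (hα : α ∈ Set.Ioo (0:ℝ) 1) (k : ℕ) :
    cfB α k < 1 := by
  induction k with
  | zero => rw [cfB_zero]; exact hα.2
  | succ k ih =>
    rw [cfB_succ]
    have h1 := cfB_pos hirr hα k
    have h2 := (cfT_prop hirr hα (k+1)).2
    nlinarith [h2.1, h2.2]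

lemma cfB_strict (hirr : Irrational α) (hα : α ∈ Set.Ioo (0:ℝ) 1) (k : ℕ) :
    cfB α (k + 1) < cfB α k := by
  rw [cfB_succ]
  have h1 := cfB_pos hirr hα k
  have h2 := (cfT_prop hirr hα (k+1)).2
  nlinarith [h2.1, h2.2]

lemma cfB_one (hirr : Irrational α) (hα : α ∈ Set.Ioo (0:ℝ) 1) :
    cfB α 1 = 1 - (pquot α 1 : ℝ) * α := by
  have h := cfT_inv_eq hirr hα 0
  rw [cfT_zero] at h
  have hα0 : α ≠ 0 := ne_of_gt hα.1
  rw [cfB_succ, cfB_zero]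
  have : cfT α 1 = α⁻¹ - (pquot α 1 : ℝ) := by rw [h]; ring
  rw [this, mul_sub, mul_inv_cancel₀ hα0]
  ring

lemma cfB_rec (hirr : Irrational α) (hα : α ∈ Set.Ioo (0:ℝ) 1) (k : ℕ) :
    cfB α (k + 2) = cfB α k - (pquot α (k + 2) : ℝ) * cfB α (k + 1) := by
  have h := cfT_inv_eq hirr hα (k + 1)
  have ht : cfT α (k + 1) ≠ 0 := ne_of_gt (cfT_prop hirr hα (k+1)).2.1
  have h2 : cfT α (k + 2) = (cfT α (k+1))⁻¹ - (pquot α (k + 2) : ℝ) := by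
    rw [h]; ring
  rw [show k + 2 = (k+1) + 1 from rfl, cfB_succ, h2, cfB_succ, mul_sub]
  rw [mul_assoc, mul_inv_cancel₀ ht]
  ring


lemma cfDen_zero : cfDen α 0 = 1 := rfl
lemma cfDen_one : cfDen α 1 = pquot α 1 := rfl
lemma cfDen_two (k : ℕ) :
    cfDen α (k + 2) = pquot α (k + 2) * cfDen α (k + 1) + cfDen α k := rfl
lemma cfNum_zero : cfNum α 0 = 0 := rfl
lemma cfNum_one : cfNum α 1 = 1 := rfl
lemma cfNum_two (k : ℕ) :
    cfNum α (k + 2) = pquot α (k + 2) * cfNum α (k + 1) + cfNum α k := rfl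

lemma one_le_cfDen (hirr : Irrational α) (hα : α ∈ Set.Ioo (0:ℝ) 1) (k : ℕ) :
    1 ≤ cfDen α k := by
  induction k using Nat.strong_induction_on with
  | _ k ih =>
    match k with
    | 0 => exact le_refl 1
    | 1 => exact one_le_pquot hirr hα 0
    | k + 2 =>
      have := ih k (by omega)
      rw [cfDen_two]
      omega

lemma cfDen_le_succ (hirr : Irrational α) (hα : α ∈ Set.Ioo (0:ℝ) 1) (k : ℕ) :
    cfDen α k ≤ cfDen α (k + 1) := by
  match k with
  | 0 => exact one_le_pquot hirr hα 0
  | k + 1 =>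
    rw [cfDen_two]
    have h1 := one_le_pquot hirr hα (k + 1)
    have h2 := one_le_cfDen hirr hα (k + 1)
    nlinarith

lemma cfDen_mono (hirr : Irrational α) (hα : α ∈ Set.Ioo (0:ℝ) 1) :
    Monotone (cfDen α) :=
  monotone_nat_of_le_succ (cfDen_le_succ hirr hα)

lemma cfD_eq (hirr : Irrational α) (hα : α ∈ Set.Ioo (0:ℝ) 1) (k : ℕ) :
    (cfDen α k : ℝ) * α - (cfNum α k : ℝ) = (-1) ^ k * cfB α k := by
  have key : ∀ k : ℕ, ((cfDen α k : ℝ) * α - (cfNum α k : ℝ) = (-1) ^ k * cfB α k)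
      ∧ ((cfDen α (k+1) : ℝ) * α - (cfNum α (k+1) : ℝ) = (-1) ^ (k+1) * cfB α (k+1)) := by
    intro k
    induction k with
    | zero =>
      constructor
      · simp [cfDen_zero, cfNum_zero, cfB_zero]
      · rw [cfDen_one, cfNum_one, cfB_one hirr hα]; ring
    | succ k ih =>
      obtain ⟨h1, h2⟩ := ih
      refine ⟨h2, ?_⟩
      rw [show k + 1 + 1 = k + 2 from rfl, cfDen_two, cfNum_two, cfB_rec hirr hα]
      push_cast
      linear_combination ((pquot α (k+2) : ℝ)) * h2 + h1
  exact (key k).1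

lemma cfDet (k : ℕ) :
    (cfNum α (k+1) : ℤ) * (cfDen α k : ℤ) - (cfNum α k : ℤ) * (cfDen α (k+1) : ℤ)
      = (-1) ^ k := by
  induction k with
  | zero => simp [cfDen_zero, cfNum_zero, cfNum_one]
  | succ k ih =>
    rw [show k + 1 + 1 = k + 2 from rfl, cfDen_two, cfNum_two]
    push_cast
    linear_combination (-1 : ℤ) * ih

lemma cfE (hirr : Irrational α) (hα : α ∈ Set.Ioo (0:ℝ) 1) (k : ℕ) :
    (cfDen α (k+1) : ℝ) * cfB α k + (cfDen α k : ℝ) * cfB α (k+1) = 1 := by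
  induction k with
  | zero =>
    rw [cfDen_one, cfDen_zero, cfB_zero, cfB_one hirr hα]
    push_cast
    ring
  | succ k ih =>
    rw [show k + 1 + 1 = k + 2 from rfl, cfDen_two, cfB_rec hirr hα]
    push_cast
    linear_combination ih

lemma cfB_gt (hirr : Irrational α) (hα : α ∈ Set.Ioo (0:ℝ) 1) (k : ℕ) :
    1 / (2 * (cfDen α (k+1) : ℝ)) < cfB α k := by
  have hE := cfE hirr hα k
  have h1 : (cfDen α k : ℝ) ≤ (cfDen α (k+1) : ℝ) := by
    exact_mod_cast cfDen_le_succ hirr hα k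
  have h2 := cfB_strict hirr hα k
  have h3 := cfB_pos hirr hα (k+1)
  have h4 := cfB_pos hirr hα k
  have h5 : (1:ℝ) ≤ (cfDen α (k+1) : ℝ) := by
    exact_mod_cast one_le_cfDen hirr hα (k+1)
  have h6 : (0:ℝ) < (cfDen α k : ℝ) := by
    have : (1:ℝ) ≤ (cfDen α k : ℝ) := by exact_mod_cast one_le_cfDen hirr hα k
    linarith
  rw [div_lt_iff₀ (by linarith)]
  nlinarith

lemma bestApprox (hirr : Irrational α) (hα : α ∈ Set.Ioo (0:ℝ) 1) (m : ℕ)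
    (d e : ℤ) (hd0 : d ≠ 0) (hdlt : |d| < (cfDen α (m+1) : ℤ)) :
    cfB α m ≤ |(d : ℝ) * α - (e : ℝ)| := by
  set x : ℤ := (-1)^m * ((cfNum α (m+1) : ℤ) * d - (cfDen α (m+1) : ℤ) * e) with hxdef
  set y : ℤ := (-1)^m * ((cfDen α m : ℤ) * e - (cfNum α m : ℤ) * d) with hydef
  have hdet := cfDet (α := α) m
  have hsq : ((-1:ℤ)^m) * ((-1:ℤ)^m) = 1 := by
    rw [← mul_pow]; norm_num
  have hx : x * (cfDen α m : ℤ) + y * (cfDen α (m+1) : ℤ) = d := by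
    have h : x * (cfDen α m : ℤ) + y * (cfDen α (m+1) : ℤ)
        = ((-1:ℤ)^m * (-1)^m) * d := by
      rw [hxdef, hydef]
      linear_combination ((-1:ℤ)^m * d) * hdet
    rw [h, hsq, one_mul]
  have hy : x * (cfNum α m : ℤ) + y * (cfNum α (m+1) : ℤ) = e := by
    have h : x * (cfNum α m : ℤ) + y * (cfNum α (m+1) : ℤ)
        = ((-1:ℤ)^m * (-1)^m) * e := by
      rw [hxdef, hydef]
      linear_combination ((-1:ℤ)^m * e) * hdet
    rw [h, hsq, one_mul]
  have hx' : (x:ℝ) * (cfDen α m : ℝ) + (y:ℝ) * (cfDen α (m+1) : ℝ) = (d:ℝ) := by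
    exact_mod_cast congrArg (fun z : ℤ => (z : ℝ)) hx
  have hy' : (x:ℝ) * (cfNum α m : ℝ) + (y:ℝ) * (cfNum α (m+1) : ℝ) = (e:ℝ) := by
    exact_mod_cast congrArg (fun z : ℤ => (z : ℝ)) hy
  have D1 := cfD_eq hirr hα m
  have D2 := cfD_eq hirr hα (m+1)
  have hreal : (d:ℝ) * α - (e:ℝ)
      = (-1:ℝ)^m * ((x:ℝ) * cfB α m - (y:ℝ) * cfB α (m+1)) := by
    have step : (d:ℝ) * α - (e:ℝ)
        = (x:ℝ) * ((cfDen α m : ℝ) * α - (cfNum α m : ℝ))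
          + (y:ℝ) * ((cfDen α (m+1) : ℝ) * α - (cfNum α (m+1) : ℝ)) := by
      linear_combination (-α) * hx' + hy'
    rw [step, D1, D2]
    ring
  rw [hreal, abs_mul, abs_pow, abs_neg, abs_one, one_pow, one_mul]
  have hβm := cfB_pos hirr hα m
  have hβ1 := cfB_pos hirr hα (m+1)
  have hβs := cfB_strict hirr hα m
  have hQpos : (0:ℤ) < (cfDen α (m+1) : ℤ) := by
    exact_mod_cast one_le_cfDen hirr hα (m+1)
  have hQmpos : (0:ℤ) < (cfDen α m : ℤ) := by
    exact_mod_cast one_le_cfDen hirr hα m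
  -- x ≠ 0
  have hx0 : x ≠ 0 := by
    intro h0
    rw [h0, zero_mul, zero_add] at hx
    rcases eq_or_ne y 0 with hy0 | hy0
    · rw [hy0] at hx; simp at hx; exact hd0 hx.symm
    · have : (cfDen α (m+1) : ℤ) ≤ |d| := by
        rw [← hx, abs_mul, abs_of_pos hQpos]
        nlinarith [Int.one_le_abs hy0]
      omega
  have hx1 : (1:ℤ) ≤ |x| := Int.one_le_abs hx0
  rcases eq_or_ne y 0 with hy0 | hy0
  · -- y = 0
    rw [hy0]
    push_cast
    rw [zero_mul, sub_zero, abs_mul, abs_of_pos hβm]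
    have : (1:ℝ) ≤ |(x:ℝ)| := by exact_mod_cast hx1
    nlinarith
  · -- both nonzero: opposite signs
    have hy1 : (1:ℤ) ≤ |y| := Int.one_le_abs hy0
    have hxy : x * y < 0 := by
      rcases lt_trichotomy (x * y) 0 with h | h | h
      · exact h
      · exact absurd (mul_eq_zero.1 h) (by tauto)
      · -- same sign, contradiction
        exfalso
        obtain ⟨hl, hr⟩ := abs_lt.1 hdlt
        rcases lt_trichotomy x 0 with hxneg | hx00 | hxpos
        · have hyneg : y < 0 := by
            rcases lt_trichotomy y 0 with h' | h' | h'
            · exact h'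
            · exact absurd h' hy0
            · exact absurd (mul_neg_of_neg_of_pos hxneg h') (by linarith)
          have e1 : x * (cfDen α m : ℤ) ≤ (-1) * (cfDen α m : ℤ) :=
            mul_le_mul_of_nonneg_right (by omega) hQmpos.le
          have e2 : y * (cfDen α (m+1) : ℤ) ≤ (-1) * (cfDen α (m+1) : ℤ) :=
            mul_le_mul_of_nonneg_right (by omega) hQpos.le
          linarith [hx]
        · exact hx0 hx00
        · have hypos : 0 < y := by
            rcases lt_trichotomy y 0 with h' | h' | h'
            · exact absurd (mul_neg_of_pos_of_neg hxpos h') (by linarith)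
            · exact absurd h' hy0
            · exact h'
          have e1 : (1) * (cfDen α m : ℤ) ≤ x * (cfDen α m : ℤ) :=
            mul_le_mul_of_nonneg_right (by omega) hQmpos.le
          have e2 : (1) * (cfDen α (m+1) : ℤ) ≤ y * (cfDen α (m+1) : ℤ) :=
            mul_le_mul_of_nonneg_right (by omega) hQpos.le
          linarith [hx]
    rcases lt_trichotomy x 0 with hxneg | hx00 | hxpos
    · have hypos : 0 < y := by
        rcases lt_trichotomy y 0 with h' | h' | h'
        · exact absurd (mul_pos_of_neg_of_neg hxneg h') (by linarith)
        · exact absurd h' hy0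
        · exact h'
      have hxr : (x:ℝ) ≤ -1 := by exact_mod_cast (show x ≤ (-1:ℤ) by omega)
      have hyr : (1:ℝ) ≤ (y:ℝ) := by exact_mod_cast (show (1:ℤ) ≤ y by omega)
      rw [abs_sub_comm]
      rw [le_abs]
      left
      nlinarith
    · exact absurd hx00 hx0
    · have hyneg : y < 0 := by
        rcases lt_trichotomy y 0 with h' | h' | h'
        · exact h'
        · exact absurd h' hy0
        · exact absurd (mul_pos hxpos h') (by linarith)
      have hxr : (1:ℝ) ≤ (x:ℝ) := by exact_mod_cast (show (1:ℤ) ≤ x by omega)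
      have hyr : (y:ℝ) ≤ -1 := by exact_mod_cast (show y ≤ (-1:ℤ) by omega)
      rw [le_abs]
      left
      nlinarith


lemma nint_nonneg (x : ℝ) : 0 ≤ nint x := abs_nonneg _

lemma nint_le_int (x : ℝ) (e : ℤ) : nint x ≤ |x - e| := round_le x e

lemma nint_le_half (x : ℝ) : nint x ≤ 1/2 := abs_sub_round x

lemma nint_eq_min (x : ℝ) : nint x = min (Int.fract x) (1 - Int.fract x) :=
  abs_sub_round_eq_min x

lemma nint_nat_mul (k : ℕ) (x : ℝ) : nint ((k:ℝ) * x) ≤ (k:ℝ) * nint x := by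
  have h := nint_le_int ((k:ℝ) * x) ((k : ℤ) * round x)
  refine h.trans_eq ?_
  unfold nint
  push_cast
  rw [← mul_sub, abs_mul, Nat.abs_cast]

lemma nint_pos {x : ℝ} (h : Irrational x) : 0 < nint x :=
  abs_pos.2 (sub_ne_zero.2 (h.ne_int _))

end Stmt16Aux

open Stmt16Aux

set_option maxHeartbeats 1000000

/-- tail bound for `∑_{|j| ≥ q_ℓ} (1/j²) ‖q_n j α‖²/‖j α‖²`. -/
theorem stmt16 :
    ∃ C : ℝ, 0 < C ∧
      ∀ α : ℝ, Irrational α → α ∈ Set.Ioo (0:ℝ) 1 →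
      ∀ n ℓ : ℕ, n ≤ ℓ →
        (∑' j : ℤ, if (cfDen α ℓ : ℤ) ≤ |j| then
            (1 / (j : ℝ) ^ 2) * nint ((cfDen α n : ℝ) * (j : ℝ) * α) ^ 2 /
              nint ((j : ℝ) * α) ^ 2
          else 0)
        ≤ C * (cfDen α n : ℝ) / (cfDen α ℓ : ℝ) := by
  refine ⟨100, by norm_num, ?_⟩
  intro α hirr hα n ℓ hnℓ
  have hq1 : 1 ≤ cfDen α ℓ := one_le_cfDen hirr hα ℓ
  have hqn1 : 1 ≤ cfDen α n := one_le_cfDen hirr hα n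
  have hqnq : cfDen α n ≤ cfDen α ℓ := cfDen_mono hirr hα hnℓ
  set q : ℕ := cfDen α ℓ with hqdef
  set qn : ℕ := cfDen α n with hqndef
  have hqR : (0:ℝ) < q := by exact_mod_cast hq1
  have hqnR : (0:ℝ) < qn := by exact_mod_cast hqn1
  have hqnqR : (qn:ℝ) ≤ (q:ℝ) := by exact_mod_cast hqnq
  apply tsum_le_of_sum_le'
  · positivity
  intro u
  set w : ℕ → ℕ := fun b => max (min b (2*q - 1 - b)) 1 with hwdef
  set G : ℕ → ℝ := fun b => min ((qn:ℝ)^2) ((q:ℝ)^2 / ((w b : ℕ):ℝ)^2) with hGdef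
  set F : Bool × ℕ × ℕ → ℝ := fun t =>
    if 1 ≤ t.2.1 ∧ t.2.2 < 2*q then (1/(((t.2.1 * q : ℕ)):ℝ)^2) * G t.2.2 else 0
    with hFdef
  set τ : ℤ → Bool × ℕ × ℕ := fun j =>
    (decide (0 < j), j.natAbs / q, (⌊2*(q:ℝ) * Int.fract ((j:ℝ)*α)⌋).toNat) with hτdef
  have hG0 : ∀ b, 0 ≤ G b := by
    intro b
    exact le_min (by positivity) (by positivity)
  have hF0 : ∀ t, 0 ≤ F t := by
    intro t
    simp only [hFdef]
    split
    · have := hG0 t.2.2; positivity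
    · exact le_refl 0
  -- bucket facts
  have hbuck : ∀ j : ℤ, ((τ j).2.2 : ℝ) ≤ 2*(q:ℝ)*Int.fract ((j:ℝ)*α)
      ∧ 2*(q:ℝ)*Int.fract ((j:ℝ)*α) < ((τ j).2.2 : ℝ) + 1 ∧ (τ j).2.2 < 2*q := by
    intro j
    have hx0 : 0 ≤ Int.fract ((j:ℝ)*α) := Int.fract_nonneg _
    have hx1 : Int.fract ((j:ℝ)*α) < 1 := Int.fract_lt_one _
    have hX0 : (0:ℝ) ≤ 2*(q:ℝ)*Int.fract ((j:ℝ)*α) := by positivity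
    have hfl0 : 0 ≤ ⌊2*(q:ℝ)*Int.fract ((j:ℝ)*α)⌋ := Int.floor_nonneg.2 hX0
    have hcast : (((⌊2*(q:ℝ)*Int.fract ((j:ℝ)*α)⌋).toNat : ℕ) : ℝ)
        = ((⌊2*(q:ℝ)*Int.fract ((j:ℝ)*α)⌋ : ℤ) : ℝ) := by
      exact_mod_cast congrArg (fun z : ℤ => (z:ℝ)) (Int.toNat_of_nonneg hfl0)
    have h2 : (τ j).2.2 = (⌊2*(q:ℝ)*Int.fract ((j:ℝ)*α)⌋).toNat := rfl
    refine ⟨?_, ?_, ?_⟩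
    · rw [h2, hcast]; exact Int.floor_le _
    · rw [h2, hcast]; exact Int.lt_floor_add_one _
    · rw [h2]
      have hlt : ⌊2*(q:ℝ)*Int.fract ((j:ℝ)*α)⌋ < (2*q : ℕ) := by
        apply Int.floor_lt.2
        push_cast
        nlinarith
      omega
  -- index facts
  have hK : ∀ j : ℤ, (q:ℤ) ≤ |j| →
      1 ≤ (τ j).2.1 ∧ (τ j).2.1 * q ≤ j.natAbs ∧ j.natAbs < ((τ j).2.1 + 1) * q
        ∧ j ≠ 0 := by
    intro j hj
    have habs : q ≤ j.natAbs := by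
      rw [Int.abs_eq_natAbs] at hj
      exact_mod_cast hj
    have hq0 : 0 < q := hq1
    have hKK : (τ j).2.1 = j.natAbs / q := rfl
    refine ⟨?_, ?_, ?_, ?_⟩
    · rw [hKK]; exact (Nat.one_le_div_iff hq0).2 habs
    · rw [hKK]; exact Nat.div_mul_le_self _ _
    · rw [hKK]
      have h1 := Nat.div_add_mod j.natAbs q
      have h2 := Nat.mod_lt j.natAbs hq0
      have e : (j.natAbs / q + 1) * q = q * (j.natAbs / q) + q := by ring
      rw [e]
      linarith
    · intro h0; rw [h0] at habs; simp at habs; omega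
  -- pointwise bound
  have hpoint : ∀ j : ℤ, (q:ℤ) ≤ |j| →
      (1 / (j : ℝ) ^ 2) * nint ((qn : ℝ) * (j : ℝ) * α) ^ 2 / nint ((j : ℝ) * α) ^ 2
        ≤ F (τ j) := by
    intro j hj
    obtain ⟨hK1, hKle, hKlt, hj0⟩ := hK j hj
    obtain ⟨hb1, hb2, hb3⟩ := hbuck j
    set θ := nint ((j:ℝ)*α) with hθ
    set A := nint ((qn:ℝ)*(j:ℝ)*α) with hA
    set b := (τ j).2.2 with hb
    set K := (τ j).2.1 with hKd
    have hθpos : 0 < θ := nint_pos (hirr.intCast_mul hj0)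
    have hA1 : A ≤ (qn:ℝ) * θ := by
      rw [hA, hθ, mul_assoc]
      exact nint_nat_mul qn ((j:ℝ)*α)
    have hA2 : A ≤ 1/2 := nint_le_half _
    have hA0 : 0 ≤ A := nint_nonneg _
    have hr1 : A^2/θ^2 ≤ (qn:ℝ)^2 := by
      rw [div_le_iff₀ (by positivity)]
      nlinarith
    -- θ lower bound from bucket
    have hθlow : ((min b (2*q - 1 - b) : ℕ) : ℝ) ≤ 2*(q:ℝ)*θ := by
      have hfr : θ = min (Int.fract ((j:ℝ)*α)) (1 - Int.fract ((j:ℝ)*α)) :=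
        nint_eq_min _
      have hble : b ≤ 2*q - 1 := by omega
      have hcast : ((min b (2*q - 1 - b) : ℕ) : ℝ)
          = min (b:ℝ) (2*(q:ℝ) - 1 - (b:ℝ)) := by
        push_cast [Nat.cast_min, Nat.cast_sub hble, Nat.cast_sub (show 1 ≤ 2*q by omega)]
        norm_num
      rw [hcast, hfr]
      rcases le_total (Int.fract ((j:ℝ)*α)) (1 - Int.fract ((j:ℝ)*α)) with h | h
      · rw [min_eq_left h]
        calc min (b:ℝ) (2*(q:ℝ) - 1 - (b:ℝ)) ≤ (b:ℝ) := min_le_left _ _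
          _ ≤ 2*(q:ℝ)*Int.fract ((j:ℝ)*α) := hb1
      · rw [min_eq_right h]
        calc min (b:ℝ) (2*(q:ℝ) - 1 - (b:ℝ)) ≤ 2*(q:ℝ) - 1 - (b:ℝ) := min_le_right _ _
          _ ≤ 2*(q:ℝ)*(1 - Int.fract ((j:ℝ)*α)) := by nlinarith
    have hr2 : A^2/θ^2 ≤ (q:ℝ)^2/((w b : ℕ):ℝ)^2 := by
      rcases Nat.eq_zero_or_pos (min b (2*q - 1 - b)) with hmin | hmin
      · have hw1 : w b = 1 := by simp [hwdef, hmin]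
        rw [hw1]
        norm_num
        calc A^2/θ^2 ≤ (qn:ℝ)^2 := hr1
          _ ≤ (q:ℝ)^2 := by nlinarith
      · have hw1 : (w b : ℕ) = min b (2*q - 1 - b) := by
          simp only [hwdef]
          omega
        have hwR : ((w b : ℕ):ℝ) ≤ 2*(q:ℝ)*θ := by rw [hw1]; exact hθlow
        have hwpos : (0:ℝ) < ((w b : ℕ):ℝ) := by
          rw [hw1]
          exact_mod_cast hmin
        rw [div_le_div_iff₀ (by positivity) (by positivity)]
        have e1 : ((w b : ℕ):ℝ)^2 ≤ (2*(q:ℝ)*θ)^2 := by nlinarith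
        have e2 : A^2 ≤ (1/2)^2 := by nlinarith
        calc A^2 * ((w b : ℕ):ℝ)^2 ≤ (1/2)^2 * (2*(q:ℝ)*θ)^2 :=
              mul_le_mul e2 e1 (by positivity) (by positivity)
          _ = (q:ℝ)^2 * θ^2 := by ring
    have hjsq : ((((K * q : ℕ)):ℝ))^2 ≤ (j:ℝ)^2 := by
      have h1 : ((K*q : ℕ):ℝ) ≤ ((j.natAbs : ℕ):ℝ) := by exact_mod_cast hKle
      have h2 : ((j.natAbs : ℕ):ℝ) = |(j:ℝ)| := by
        rw [Nat.cast_natAbs, Int.cast_abs]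
      have h3 : (0:ℝ) ≤ ((K*q:ℕ):ℝ) := by positivity
      have h1' : ((K*q:ℕ):ℝ) ≤ |(j:ℝ)| := h2 ▸ h1
      calc ((K*q:ℕ):ℝ)^2 ≤ |(j:ℝ)|^2 := by nlinarith [abs_nonneg (j:ℝ)]
        _ = (j:ℝ)^2 := sq_abs _
    have hKq0 : (0:ℝ) < ((K*q:ℕ):ℝ) := by
      have h4 : 0 < K * q := Nat.mul_pos hK1 hq1
      exact_mod_cast h4
    have hfinal : (1/(j:ℝ)^2) * A^2 / θ^2 ≤ (1/((K*q:ℕ):ℝ)^2) * G b := by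
      rw [mul_div_assoc]
      apply mul_le_mul
      · exact one_div_le_one_div_of_le (by positivity) hjsq
      · simp only [hGdef]
        exact le_min hr1 hr2
      · positivity
      · positivity
    have hFval : F (τ j) = (1/((K*q:ℕ):ℝ)^2) * G b := by
      simp only [hFdef]
      rw [if_pos]
      exact ⟨hK1, hb3⟩
    rw [hFval]
    exact hfinal
  -- injectivity
  have hinj : ∀ j : ℤ, (q:ℤ) ≤ |j| → ∀ j' : ℤ, (q:ℤ) ≤ |j'| → τ j = τ j' → j = j' := by
    intro j hj j' hj' heq
    by_contra hne
    obtain ⟨hK1, hKle, hKlt, hj0⟩ := hK j hj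
    obtain ⟨hK1', hKle', hKlt', hj0'⟩ := hK j' hj'
    obtain ⟨hb1, hb2, hb3⟩ := hbuck j
    obtain ⟨hb1', hb2', hb3'⟩ := hbuck j'
    have hsgn : (0 < j) ↔ (0 < j') := by
      have h := congrArg Prod.fst heq
      simp only [hτdef] at h
      exact decide_eq_decide.1 h
    have hKeq : (τ j).2.1 = (τ j').2.1 := by rw [heq]
    have hbeq : (τ j).2.2 = (τ j').2.2 := by rw [heq]
    -- |j - j'| < q
    have hdist : (j - j').natAbs < q := by
      set K := (τ j).2.1 with hKd
      rw [← hKeq] at hKle' hKlt'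
      have e1 : (K + 1) * q = K * q + q := by ring
      rw [e1] at hKlt hKlt'
      omega
    have hdne : j - j' ≠ 0 := sub_ne_zero.2 hne
    -- fract distance small
    have hfr : |((j - j' : ℤ):ℝ) * α - ((⌊(j:ℝ)*α⌋ - ⌊(j':ℝ)*α⌋ : ℤ):ℝ)|
        < 1/(2*(q:ℝ)) := by
      have hrw : ((j - j' : ℤ):ℝ) * α - ((⌊(j:ℝ)*α⌋ - ⌊(j':ℝ)*α⌋ : ℤ):ℝ)
          = Int.fract ((j:ℝ)*α) - Int.fract ((j':ℝ)*α) := by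
        rw [← Int.self_sub_floor, ← Int.self_sub_floor]
        push_cast
        ring
      rw [hrw, abs_lt]
      rw [← hbeq] at hb1' hb2'
      constructor
      · rw [neg_lt, ← neg_sub]
        rw [lt_div_iff₀ (by positivity)]
        nlinarith
      · rw [lt_div_iff₀ (by positivity)]
        nlinarith
    -- contradiction with best approximation
    match ℓ, hqdef with
    | 0, hqdef =>
      have hqq : q = 1 := hqdef
      omega
    | m + 1, hqdef =>
      have happrox := bestApprox hirr hα m (j - j') (⌊(j:ℝ)*α⌋ - ⌊(j':ℝ)*α⌋)
        hdne (by rw [Int.abs_eq_natAbs, ← hqdef]; exact_mod_cast hdist)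
      have hBgt := cfB_gt hirr hα m
      rw [← hqdef] at hBgt
      linarith
  -- summation
  set M := u.sup (fun j => j.natAbs) with hMdef
  set g : ℕ → ℝ := fun k => min ((qn:ℝ)^2) ((q:ℝ)^2 / ((max k 1 : ℕ):ℝ)^2) with hgdef
  have hg0 : ∀ k, 0 ≤ g k := fun k => le_min (by positivity) (by positivity)
  have hGg : ∀ b, b < 2*q → G b ≤ g b + g (2*q - 1 - b) := by
    intro b hb
    have hGb : G b = g (min b (2*q - 1 - b)) := by
      simp only [hGdef, hgdef, hwdef]
    rw [hGb]
    rcases le_total b (2*q - 1 - b) with h | h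
    · rw [min_eq_left h]
      exact le_add_of_nonneg_right (hg0 _)
    · rw [min_eq_right h]
      exact le_add_of_nonneg_left (hg0 _)
  set K0 := q / qn with hK0def
  have hK01 : 1 ≤ K0 := (Nat.one_le_div_iff (by omega)).2 hqnq
  have hK0le : K0 * qn ≤ q := Nat.div_mul_le_self q qn
  have hqlt : q < (K0 + 1) * qn := by
    have h1 := Nat.div_add_mod q qn
    have h2 := Nat.mod_lt q (show 0 < qn by omega)
    have e : (K0 + 1) * qn = qn * K0 + qn := by ring
    rw [e, hK0def]
    linarith [h1, h2]
  have hK0R : (1:ℝ) ≤ (K0:ℝ) := by exact_mod_cast hK01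
  have hK0leR : (K0:ℝ) * (qn:ℝ) ≤ (q:ℝ) := by exact_mod_cast hK0le
  have hqltR : (q:ℝ) < ((K0:ℝ) + 1) * (qn:ℝ) := by exact_mod_cast hqlt
  have hgsum : ∑ k ∈ Finset.range (2*q), g k ≤ 4*(q:ℝ)*(qn:ℝ) := by
    rw [← Finset.sum_filter_add_sum_filter_not (Finset.range (2*q)) (fun k => k ≤ K0) g]
    have hpart1 : ∑ k ∈ (Finset.range (2*q)).filter (fun k => k ≤ K0), g k
        ≤ 2*(q:ℝ)*(qn:ℝ) := by
      have hcard : ((Finset.range (2*q)).filter (fun k => k ≤ K0)).card ≤ K0 + 1 := by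
        have hsub : (Finset.range (2*q)).filter (fun k => k ≤ K0)
            ⊆ Finset.range (K0+1) := by
          intro k hk
          simp only [Finset.mem_filter, Finset.mem_range] at hk ⊢
          omega
        simpa using Finset.card_le_card hsub
      have hcR : ((((Finset.range (2*q)).filter (fun k => k ≤ K0)).card : ℕ) : ℝ)
          ≤ (K0:ℝ) + 1 := by exact_mod_cast hcard
      calc ∑ k ∈ (Finset.range (2*q)).filter (fun k => k ≤ K0), g k
          ≤ ∑ _k ∈ (Finset.range (2*q)).filter (fun k => k ≤ K0), (qn:ℝ)^2 :=
            Finset.sum_le_sum (fun k _ => min_le_left _ _)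
        _ = ((((Finset.range (2*q)).filter (fun k => k ≤ K0)).card : ℕ) : ℝ) * (qn:ℝ)^2 := by
            rw [Finset.sum_const, nsmul_eq_mul]
        _ ≤ ((K0:ℝ) + 1) * (qn:ℝ)^2 := by nlinarith
        _ ≤ 2*(q:ℝ)*(qn:ℝ) := by nlinarith
    have hpart2 : ∑ k ∈ (Finset.range (2*q)).filter (fun k => ¬ k ≤ K0), g k
        ≤ 2*(q:ℝ)*(qn:ℝ) := by
      have hsub : (Finset.range (2*q)).filter (fun k => ¬ k ≤ K0)
          ⊆ Finset.Ioo K0 (2*q) := by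
        intro k hk
        simp only [Finset.mem_filter, Finset.mem_range, Finset.mem_Ioo] at hk ⊢
        omega
      calc ∑ k ∈ (Finset.range (2*q)).filter (fun k => ¬ k ≤ K0), g k
          ≤ ∑ k ∈ (Finset.range (2*q)).filter (fun k => ¬ k ≤ K0),
              (q:ℝ)^2 * (((k:ℝ))^2)⁻¹ := by
            apply Finset.sum_le_sum
            intro k hk
            simp only [Finset.mem_filter, Finset.mem_range] at hk
            have hk1 : 1 ≤ k := by omega
            have hmax : (max k 1 : ℕ) = k := max_eq_left hk1
            calc g k ≤ (q:ℝ)^2/((max k 1 : ℕ):ℝ)^2 := min_le_right _ _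
              _ = (q:ℝ)^2 * (((k:ℝ))^2)⁻¹ := by rw [hmax, div_eq_mul_inv]
        _ ≤ ∑ k ∈ Finset.Ioo K0 (2*q), (q:ℝ)^2 * (((k:ℝ))^2)⁻¹ :=
            Finset.sum_le_sum_of_subset_of_nonneg hsub (fun k _ _ => by positivity)
        _ = (q:ℝ)^2 * ∑ k ∈ Finset.Ioo K0 (2*q), (((k:ℝ))^2)⁻¹ :=
            (Finset.mul_sum _ _ _).symm
        _ ≤ (q:ℝ)^2 * (2/((K0:ℝ)+1)) := by
            apply mul_le_mul_of_nonneg_left ?_ (by positivity)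
            exact_mod_cast sum_Ioo_inv_sq_le K0 (2*q) (α := ℝ)
        _ ≤ 2*(q:ℝ)*(qn:ℝ) := by
            rw [← mul_div_assoc, div_le_iff₀ (by positivity)]
            nlinarith
    linarith
  have hGsum : ∑ b ∈ Finset.range (2*q), G b ≤ 8*(q:ℝ)*(qn:ℝ) := by
    calc ∑ b ∈ Finset.range (2*q), G b
        ≤ ∑ b ∈ Finset.range (2*q), (g b + g (2*q - 1 - b)) :=
          Finset.sum_le_sum (fun b hb => hGg b (Finset.mem_range.1 hb))
      _ = ∑ b ∈ Finset.range (2*q), g b + ∑ b ∈ Finset.range (2*q), g (2*q - 1 - b) :=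
          Finset.sum_add_distrib
      _ = ∑ b ∈ Finset.range (2*q), g b + ∑ b ∈ Finset.range (2*q), g b := by
          rw [Finset.sum_range_reflect]
      _ ≤ 4*(q:ℝ)*(qn:ℝ) + 4*(q:ℝ)*(qn:ℝ) := by linarith
      _ = 8*(q:ℝ)*(qn:ℝ) := by ring
  have hKsum : ∑ K ∈ Finset.Icc 1 M, (1:ℝ)/(((K*q : ℕ)):ℝ)^2 ≤ 2/(q:ℝ)^2 := by
    have h0 : ∀ K ∈ Finset.Icc 1 M,
        (1:ℝ)/(((K*q:ℕ)):ℝ)^2 = (1/(q:ℝ)^2) * (((K:ℝ))^2)⁻¹ := by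
      intro K hK'
      have h1 : 1 ≤ K := (Finset.mem_Icc.1 hK').1
      have hKne : ((K:ℝ)) ≠ 0 := by
        have : (1:ℝ) ≤ (K:ℝ) := by exact_mod_cast h1
        linarith
      have hqne : ((q:ℝ)) ≠ 0 := ne_of_gt hqR
      push_cast
      field_simp
    rw [Finset.sum_congr rfl h0, ← Finset.mul_sum]
    have hsub : Finset.Icc 1 M ⊆ Finset.Ioo 0 (M+1) := by
      intro k hk
      simp only [Finset.mem_Icc, Finset.mem_Ioo] at hk ⊢
      omega
    have h2 : ∑ K ∈ Finset.Icc 1 M, (((K:ℝ))^2)⁻¹ ≤ 2 := by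
      calc ∑ K ∈ Finset.Icc 1 M, (((K:ℝ))^2)⁻¹
          ≤ ∑ K ∈ Finset.Ioo 0 (M+1), (((K:ℝ))^2)⁻¹ :=
            Finset.sum_le_sum_of_subset_of_nonneg hsub (fun k _ _ => by positivity)
        _ ≤ 2/(((0:ℕ):ℝ)+1) := sum_Ioo_inv_sq_le 0 (M+1) (α := ℝ)
        _ = 2 := by norm_num
    calc (1/(q:ℝ)^2) * ∑ K ∈ Finset.Icc 1 M, (((K:ℝ))^2)⁻¹
        ≤ (1/(q:ℝ)^2) * 2 := mul_le_mul_of_nonneg_left h2 (by positivity)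
      _ = 2/(q:ℝ)^2 := by ring
  have hFeval : ∀ (s : Bool) (K b : ℕ), 1 ≤ K → b < 2*q →
      F (s, K, b) = (1/(((K*q:ℕ)):ℝ)^2) * G b := by
    intro s K b h1 h2
    simp only [hFdef]
    rw [if_pos]
    exact ⟨h1, h2⟩
  have himg : (u.filter (fun j => (q:ℤ) ≤ |j|)).image τ
      ⊆ (Finset.univ : Finset Bool) ×ˢ (Finset.Icc 1 M ×ˢ Finset.range (2*q)) := by
    intro t ht
    obtain ⟨j, hjmem, hjt⟩ := Finset.mem_image.1 ht
    obtain ⟨hju, hjq⟩ := Finset.mem_filter.1 hjmem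
    obtain ⟨hK1, hKle, hKlt, hj0⟩ := hK j hjq
    obtain ⟨_, _, hb3⟩ := hbuck j
    rw [← hjt, Finset.mem_product]
    refine ⟨Finset.mem_univ _, ?_⟩
    rw [Finset.mem_product]
    refine ⟨Finset.mem_Icc.2 ⟨hK1, ?_⟩, Finset.mem_range.2 hb3⟩
    calc (τ j).2.1 = j.natAbs / q := rfl
      _ ≤ j.natAbs := Nat.div_le_self _ _
      _ ≤ M := Finset.le_sup hju
  rw [← Finset.sum_filter]
  calc ∑ j ∈ u.filter (fun j => (q:ℤ) ≤ |j|),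
        (1/(j:ℝ)^2) * nint ((qn:ℝ)*(j:ℝ)*α)^2 / nint ((j:ℝ)*α)^2
      ≤ ∑ j ∈ u.filter (fun j => (q:ℤ) ≤ |j|), F (τ j) :=
        Finset.sum_le_sum (fun j hj => hpoint j (Finset.mem_filter.1 hj).2)
    _ = ∑ t ∈ (u.filter (fun j => (q:ℤ) ≤ |j|)).image τ, F t := by
        rw [Finset.sum_image]
        intro j hj j' hj' h
        exact hinj j (Finset.mem_filter.1 hj).2 j' (Finset.mem_filter.1 hj').2 h
    _ ≤ ∑ t ∈ (Finset.univ : Finset Bool) ×ˢ (Finset.Icc 1 M ×ˢ Finset.range (2*q)), F t :=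
        Finset.sum_le_sum_of_subset_of_nonneg himg (fun t _ _ => hF0 t)
    _ = ∑ s : Bool, ∑ K ∈ Finset.Icc 1 M, ∑ b ∈ Finset.range (2*q), F (s, K, b) := by
        rw [Finset.sum_product]
        simp only [Finset.sum_product]
    _ ≤ ∑ _s : Bool, (16*(qn:ℝ)/(q:ℝ)) := by
        apply Finset.sum_le_sum
        intro s _
        calc ∑ K ∈ Finset.Icc 1 M, ∑ b ∈ Finset.range (2*q), F (s, K, b)
            ≤ ∑ K ∈ Finset.Icc 1 M, (1/(((K*q:ℕ)):ℝ)^2) * (8*(q:ℝ)*(qn:ℝ)) := by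
              apply Finset.sum_le_sum
              intro K hK'
              have h1 : 1 ≤ K := (Finset.mem_Icc.1 hK').1
              have heq : ∑ b ∈ Finset.range (2*q), F (s, K, b)
                  = (1/(((K*q:ℕ)):ℝ)^2) * ∑ b ∈ Finset.range (2*q), G b := by
                rw [Finset.mul_sum]
                exact Finset.sum_congr rfl
                  (fun b hb => hFeval s K b h1 (Finset.mem_range.1 hb))
              rw [heq]
              exact mul_le_mul_of_nonneg_left hGsum (by positivity)
          _ = (∑ K ∈ Finset.Icc 1 M, (1:ℝ)/(((K*q:ℕ)):ℝ)^2) * (8*(q:ℝ)*(qn:ℝ)) :=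
              (Finset.sum_mul _ _ _).symm
          _ ≤ (2/(q:ℝ)^2) * (8*(q:ℝ)*(qn:ℝ)) :=
              mul_le_mul_of_nonneg_right hKsum (by positivity)
          _ = 16*(qn:ℝ)/(q:ℝ) := by field_simp; ring
    _ = 2 * (16*(qn:ℝ)/(q:ℝ)) := by
        rw [Finset.sum_const, Finset.card_univ, Fintype.card_bool, nsmul_eq_mul]
        norm_num
    _ ≤ 100 * (qn:ℝ)/(q:ℝ) := by
        have e : 2 * (16*(qn:ℝ)/(q:ℝ)) = 32*(qn:ℝ)/(q:ℝ) := by ring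
        rw [e, div_le_div_iff₀ hqR hqR]
        nlinarith
end

section
/- Let (u_n) be a sequence of real numbers with 1 ≤ u_n ≤ n^γ for some 0 ≤ γ < 1/3, and let (X_n) be a sequence of uniformly bounded, pairwise orthogonal random variables on a probability space (Ω, μ) (i.e. sup_n ‖X_n‖_∞ < ∞ and ∫ X_n X_m dμ = 0 for n ≠ m). Then (Σ_{k=1}^{N} u_k X_k)/(Σ_{k=1}^{N} u_k) → 0 as N → ∞, μ-almost everywhere. -/
open MeasureTheory Filter
open scoped Classical

section Aux
lemma aux_integrable_of_bdd {Ω : Type*} [MeasurableSpace Ω] {μ : Measure Ω} [IsFiniteMeasure μ]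
    {f : Ω → ℝ} (hf : AEMeasurable f μ) {C : ℝ} (h : ∀ ω, |f ω| ≤ C) : Integrable f μ :=
  (integrable_const C).mono' hf.aestronglyMeasurable (ae_of_all _ fun ω => by
    simpa [Real.norm_eq_abs] using h ω)

lemma aux_ae_tendsto_zero {Ω : Type*} [MeasurableSpace Ω] {μ : Measure Ω}
    {Y : ℕ → Ω → ℝ} (hmeas : ∀ j, AEMeasurable (Y j) μ)
    {b : ℕ → ℝ} (hb : Summable b)
    (hint : ∀ j, ∫⁻ ω, ENNReal.ofReal ((Y j ω) ^ 2) ∂μ ≤ ENNReal.ofReal (b j)) :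
    ∀ᵐ ω ∂μ, Tendsto (fun j => Y j ω) atTop (nhds 0) := by
  have hm : ∀ j, AEMeasurable (fun ω => ENNReal.ofReal ((Y j ω) ^ 2)) μ :=
    fun j => ((hmeas j).pow_const 2).ennreal_ofReal
  have htop : ∫⁻ ω, ∑' j, ENNReal.ofReal ((Y j ω) ^ 2) ∂μ ≠ ⊤ := by
    rw [lintegral_tsum hm]
    refine ne_top_of_le_ne_top ?_ (ENNReal.tsum_le_tsum hint)
    have h1 : ∀ j, ENNReal.ofReal (b j) ≤ ENNReal.ofReal |b j| :=
      fun j => ENNReal.ofReal_le_ofReal (le_abs_self _)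
    refine ne_top_of_le_ne_top ?_ (ENNReal.tsum_le_tsum h1)
    rw [← ENNReal.ofReal_tsum_of_nonneg (fun j => abs_nonneg _) hb.abs]
    exact ENNReal.ofReal_ne_top
  have hae : ∀ᵐ ω ∂μ, (∑' j, ENNReal.ofReal ((Y j ω) ^ 2)) < ⊤ :=
    ae_lt_top' (AEMeasurable.ennreal_tsum hm) htop
  filter_upwards [hae] with ω hω
  have h1 : Tendsto (fun j => ENNReal.ofReal ((Y j ω) ^ 2)) atTop (nhds 0) :=
    ENNReal.tendsto_atTop_zero_of_tsum_ne_top hω.ne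
  have h2 : Tendsto (fun j => (Y j ω) ^ 2) atTop (nhds 0) := by
    have := (ENNReal.tendsto_toReal (by simp)).comp h1
    simpa [Function.comp_def, ENNReal.toReal_ofReal (sq_nonneg _)] using this
  have h3 : Tendsto (fun j => |Y j ω|) atTop (nhds 0) := by
    have := (Real.continuous_sqrt.tendsto 0).comp h2
    simpa [Function.comp_def, Real.sqrt_sq_eq_abs] using this
  exact tendsto_zero_iff_abs_tendsto_zero _ |>.mpr h3

lemma aux_variance {Ω : Type*} [MeasurableSpace Ω] (μ : Measure Ω) [IsProbabilityMeasure μ]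
    (u : ℕ → ℝ) (X : ℕ → Ω → ℝ) (hmeas : ∀ n, Measurable (X n))
    (M : ℝ) (hbdd : ∀ n ω, |X n ω| ≤ M)
    (horth : ∀ n m : ℕ, n ≠ m → ∫ ω, X n ω * X m ω ∂μ = 0) (N : ℕ) :
    ∫ ω, (∑ k ∈ Finset.Icc 1 N, u k * X k ω) ^ 2 ∂μ
      ≤ ∑ k ∈ Finset.Icc 1 N, (u k) ^ 2 * M ^ 2 := by
  have hMX : ∀ k l : ℕ, ∀ ω, |X k ω * X l ω| ≤ M ^ 2 := by
    intro k l ω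
    rw [abs_mul, sq]
    exact mul_le_mul (hbdd k ω) (hbdd l ω) (abs_nonneg _) ((abs_nonneg _).trans (hbdd k ω))
  have hint : ∀ k l : ℕ, Integrable (fun ω => X k ω * X l ω) μ := fun k l =>
    aux_integrable_of_bdd (((hmeas k).mul (hmeas l)).aemeasurable) (hMX k l)
  have hexp : ∀ ω, (∑ k ∈ Finset.Icc 1 N, u k * X k ω) ^ 2
      = ∑ k ∈ Finset.Icc 1 N, ∑ l ∈ Finset.Icc 1 N, (u k * u l) * (X k ω * X l ω) := by
    intro ω
    rw [sq, Finset.sum_mul_sum]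
    exact Finset.sum_congr rfl fun k _ => Finset.sum_congr rfl fun l _ => by ring
  calc ∫ ω, (∑ k ∈ Finset.Icc 1 N, u k * X k ω) ^ 2 ∂μ
      = ∑ k ∈ Finset.Icc 1 N, ∑ l ∈ Finset.Icc 1 N,
          (u k * u l) * ∫ ω, X k ω * X l ω ∂μ := by
        simp_rw [hexp]
        rw [integral_finset_sum _ fun k _ => integrable_finset_sum _
          fun l _ => ((hint k l).const_mul _)]
        exact Finset.sum_congr rfl fun k _ => by
          rw [integral_finset_sum _ fun l _ => ((hint k l).const_mul _)]
          exact Finset.sum_congr rfl fun l _ => integral_const_mul _ _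
    _ = ∑ k ∈ Finset.Icc 1 N, (u k * u k) * ∫ ω, X k ω * X k ω ∂μ := by
        refine Finset.sum_congr rfl fun k hk => ?_
        exact Finset.sum_eq_single k (fun l _ hlk => by rw [horth k l (Ne.symm hlk), mul_zero])
          (fun h => absurd hk h)
    _ ≤ ∑ k ∈ Finset.Icc 1 N, (u k) ^ 2 * M ^ 2 := by
        refine Finset.sum_le_sum fun k _ => ?_
        rw [← sq]
        have h1 : ∫ ω, X k ω * X k ω ∂μ ≤ M ^ 2 := by
          calc ∫ ω, X k ω * X k ω ∂μ ≤ ∫ _, M ^ 2 ∂μ :=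
                integral_mono (hint k k) (integrable_const _)
                  (fun ω => (le_abs_self _).trans (hMX k k ω))
            _ = M ^ 2 := by simp
        exact mul_le_mul_of_nonneg_left h1 (sq_nonneg _)

lemma aux_rpow_cube (x : ℝ) (hx : 0 < x) (γ M : ℝ) :
    x^(3:ℕ) * ((x^(3:ℕ))^γ)^2 * M^2 / (x^(3:ℕ))^2 = M^2 * x^(6*γ-3) := by
  have k0 : ((x^(3:ℕ):ℝ))^γ = x ^ (3*γ) := by
    rw [← Real.rpow_natCast x 3, ← Real.rpow_mul hx.le]
    norm_num
  have k1 : (((x^(3:ℕ)):ℝ)^γ)^2 = x ^ (6*γ) := by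
    rw [k0, sq, ← Real.rpow_add hx]
    ring_nf
  have k3 : x ^ (3:ℝ) = x^(3:ℕ) := by
    rw [show (3:ℝ) = ((3:ℕ):ℝ) by norm_num, Real.rpow_natCast]
  rw [k1, Real.rpow_sub hx, k3]
  have hne : (x:ℝ)^(3:ℕ) ≠ 0 := pow_ne_zero _ hx.ne'
  field_simp
end Aux


/-- strong law of large numbers for weighted sums of bounded orthogonal
random variables. -/
theorem stmt19 {Ω : Type*} [MeasurableSpace Ω] (μ : Measure Ω) [IsProbabilityMeasure μ]
    (γ : ℝ) (hγ0 : 0 ≤ γ) (hγ : γ < 1/3)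
    (u : ℕ → ℝ) (hu : ∀ n : ℕ, 1 ≤ n → 1 ≤ u n ∧ u n ≤ (n : ℝ) ^ γ)
    (X : ℕ → Ω → ℝ) (hmeas : ∀ n, Measurable (X n))
    (hbdd : ∃ M : ℝ, ∀ n ω, |X n ω| ≤ M)
    (horth : ∀ n m : ℕ, n ≠ m → ∫ ω, X n ω * X m ω ∂μ = 0) :
    ∀ᵐ ω ∂μ, Filter.Tendsto
      (fun N : ℕ => (∑ k ∈ Finset.Icc 1 N, u k * X k ω) / (∑ k ∈ Finset.Icc 1 N, u k))
      Filter.atTop (nhds 0) := by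
  classical
  obtain ⟨M₀, hM₀⟩ := hbdd
  set M : ℝ := max M₀ 0 with hMdef
  have hM : 0 ≤ M := le_max_right _ _
  have hbdd' : ∀ n ω, |X n ω| ≤ M := fun n ω => (hM₀ n ω).trans (le_max_left _ _)
  set S : ℕ → Ω → ℝ := fun N ω => ∑ k ∈ Finset.Icc 1 N, u k * X k ω with hSdef
  set U : ℕ → ℝ := fun N => ∑ k ∈ Finset.Icc 1 N, u k with hUdef
  -- basic facts about U
  have hu_nonneg : ∀ k ∈ Finset.Icc 1 (0+1), True := fun _ _ => trivial
  have hU_ge : ∀ N : ℕ, (N : ℝ) ≤ U N := by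
    intro N
    have : ∀ k ∈ Finset.Icc 1 N, (1:ℝ) ≤ u k := fun k hk =>
      (hu k (Finset.mem_Icc.mp hk).1).1
    calc (N:ℝ) = ∑ _k ∈ Finset.Icc 1 N, (1:ℝ) := by simp
      _ ≤ U N := Finset.sum_le_sum this
  have hU_pos : ∀ N : ℕ, 1 ≤ N → 0 < U N := fun N hN =>
    lt_of_lt_of_le (by exact_mod_cast hN : (0:ℝ) < (N:ℝ)) (hU_ge N)
  have hU_mono : Monotone U := by
    intro a b hab
    refine Finset.sum_le_sum_of_subset_of_nonneg (Finset.Icc_subset_Icc_right hab) ?_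
    intro k hk _
    exact le_trans zero_le_one (hu k (Finset.mem_Icc.mp hk).1).1
  -- bound |S N ω| ≤ U N * M
  have hS_bdd : ∀ N ω, |S N ω| ≤ U N * M := by
    intro N ω
    calc |S N ω| ≤ ∑ k ∈ Finset.Icc 1 N, |u k * X k ω| := Finset.abs_sum_le_sum_abs _ _
      _ ≤ ∑ k ∈ Finset.Icc 1 N, u k * M := by
          refine Finset.sum_le_sum fun k hk => ?_
          have hk1 := (hu k (Finset.mem_Icc.mp hk).1).1
          rw [abs_mul, abs_of_nonneg (zero_le_one.trans hk1)]
          exact mul_le_mul_of_nonneg_left (hbdd' k ω) (zero_le_one.trans hk1)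
      _ = U N * M := by rw [hUdef, Finset.sum_mul]
  have hS_meas : ∀ N, Measurable (S N) :=
    fun N => Finset.measurable_sum _ fun k _ => (hmeas k).const_mul _
  -- the subsequence Y j = S (j^3) / U (j^3)
  set Y : ℕ → Ω → ℝ := fun j ω => S (j^3) ω / U (j^3) with hYdef
  have hY_meas : ∀ j, AEMeasurable (Y j) μ :=
    fun j => ((hS_meas (j^3)).div_const _).aemeasurable
  have hY_bdd : ∀ j ω, |Y j ω| ≤ M := by
    intro j ω
    rcases Nat.eq_zero_or_pos j with hj | hj
    · simp [hYdef, hj, hSdef, hM]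
    · have hUpos := hU_pos (j^3) (Nat.one_le_iff_ne_zero.mpr (by positivity))
      rw [hYdef, abs_div, abs_of_pos hUpos, div_le_iff₀ hUpos]
      calc |S (j^3) ω| ≤ U (j^3) * M := hS_bdd _ _
        _ = M * U (j^3) := by ring
  -- key second moment bound
  have hsum_sq : ∀ N : ℕ, ∑ k ∈ Finset.Icc 1 N, (u k)^2 * M^2
      ≤ (N : ℝ) * ((N:ℝ)^γ)^2 * M^2 := by
    intro N
    calc ∑ k ∈ Finset.Icc 1 N, (u k)^2 * M^2
        ≤ ∑ _k ∈ Finset.Icc 1 N, ((N:ℝ)^γ)^2 * M^2 := by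
          refine Finset.sum_le_sum fun k hk => ?_
          rcases Finset.mem_Icc.mp hk with ⟨hk1, hk2⟩
          have h1 : u k ≤ (N:ℝ)^γ := le_trans (hu k hk1).2
            (Real.rpow_le_rpow (Nat.cast_nonneg _) (by exact_mod_cast hk2) hγ0)
          have h0 : 0 ≤ u k := zero_le_one.trans (hu k hk1).1
          exact mul_le_mul_of_nonneg_right (pow_le_pow_left₀ h0 h1 2) (sq_nonneg M)
      _ = (N:ℝ) * ((N:ℝ)^γ)^2 * M^2 := by
          rw [Finset.sum_const, Nat.card_Icc]
          simp [nsmul_eq_mul]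
          ring
  have hYvar : ∀ j : ℕ, 1 ≤ j →
      ∫ ω, (Y j ω)^2 ∂μ ≤ M^2 * (j:ℝ)^(6*γ-3) := by
    intro j hj
    have hjpos : (0:ℝ) < (j:ℝ) := by exact_mod_cast hj
    have hN1 : 1 ≤ j^3 := Nat.one_le_iff_ne_zero.mpr (by positivity)
    have hUpos := hU_pos (j^3) hN1
    have hcube : ((j^3 : ℕ) : ℝ) = (j:ℝ)^(3:ℕ) := by push_cast; ring
    have h1 : ∫ ω, (Y j ω)^2 ∂μ = (∫ ω, (S (j^3) ω)^2 ∂μ) / (U (j^3))^2 := by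
      simp_rw [hYdef, div_pow]
      exact integral_div _ _
    rw [h1]
    have h2 := aux_variance μ u X hmeas M hbdd' horth (j^3)
    have h3 : (∫ ω, (S (j^3) ω)^2 ∂μ) / (U (j^3))^2
        ≤ ((j^3:ℕ):ℝ) * (((j^3:ℕ):ℝ)^γ)^2 * M^2 / (U (j^3))^2 := by
      have := (hsum_sq (j^3))
      gcongr
      exact h2.trans this
    refine h3.trans ?_
    have h4 : ((j^3:ℕ):ℝ) * (((j^3:ℕ):ℝ)^γ)^2 * M^2 / (U (j^3))^2
        ≤ ((j^3:ℕ):ℝ) * (((j^3:ℕ):ℝ)^γ)^2 * M^2 / (((j^3:ℕ):ℝ))^2 := by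
      have hnum : 0 ≤ ((j^3:ℕ):ℝ) * (((j^3:ℕ):ℝ)^γ)^2 * M^2 := by positivity
      have hle : ((j^3:ℕ):ℝ) ≤ U (j^3) := hU_ge _
      have hpos : (0:ℝ) < ((j^3:ℕ):ℝ) := by rw [hcube]; positivity
      gcongr
    refine h4.trans ?_
    rw [hcube]
    rw [aux_rpow_cube (j:ℝ) hjpos γ M]
  -- a.e. convergence along the subsequence
  have hsummable : Summable (fun j : ℕ => M^2 * (j:ℝ)^(6*γ-3)) := by
    refine Summable.mul_left _ ?_
    exact Real.summable_nat_rpow.mpr (by linarith)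
  have hae_sub : ∀ᵐ ω ∂μ, Tendsto (fun j => Y j ω) atTop (nhds 0) := by
    refine aux_ae_tendsto_zero hY_meas hsummable ?_
    intro j
    rcases Nat.eq_zero_or_pos j with hj | hj
    · have : ∀ ω, Y j ω = 0 := fun ω => by simp [hYdef, hj, hSdef]
      simp [this]
    · have hint : Integrable (fun ω => (Y j ω)^2) μ := by
        refine aux_integrable_of_bdd (((hY_meas j).pow_const 2)) (C := M^2) ?_
        intro ω
        rw [abs_of_nonneg (sq_nonneg _), ← sq_abs]
        exact pow_le_pow_left₀ (abs_nonneg _) (hY_bdd j ω) 2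
      rw [← ofReal_integral_eq_lintegral_ofReal hint (ae_of_all _ fun ω => sq_nonneg _)]
      exact ENNReal.ofReal_le_ofReal (hYvar j hj)
  -- gap filling
  set jN : ℕ → ℕ := fun N => ⌊(N:ℝ) ^ ((3:ℝ)⁻¹)⌋₊ with hjNdef
  have hjN_facts : ∀ N : ℕ, 1 ≤ N → 1 ≤ jN N ∧ (jN N)^3 ≤ N ∧ N < (jN N + 1)^3 := by
    intro N hN
    set x : ℝ := (N:ℝ) ^ ((3:ℝ)⁻¹) with hxdef
    have hx0 : 0 ≤ x := Real.rpow_nonneg (Nat.cast_nonneg _) _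
    have hx3 : x ^ (3:ℕ) = (N:ℝ) := by
      rw [hxdef, ← Real.rpow_natCast ((N:ℝ) ^ ((3:ℝ)⁻¹)) 3, ← Real.rpow_mul (Nat.cast_nonneg _)]
      norm_num
    have hx1 : 1 ≤ x := by
      by_contra h
      push_neg at h
      have : x ^ (3:ℕ) < 1 := pow_lt_one₀ hx0 h (by norm_num)
      rw [hx3] at this
      exact absurd this (not_lt.mpr (by exact_mod_cast hN))
    have hj1 : 1 ≤ jN N := Nat.le_floor (by exact_mod_cast hx1)
    refine ⟨hj1, ?_, ?_⟩
    · have h1 : ((jN N : ℕ):ℝ) ≤ x := Nat.floor_le hx0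
      have h2 : ((jN N : ℕ):ℝ)^(3:ℕ) ≤ x ^ (3:ℕ) := pow_le_pow_left₀ (Nat.cast_nonneg _) h1 3
      rw [hx3] at h2
      exact_mod_cast h2
    · have h1 : x < ((jN N : ℕ):ℝ) + 1 := Nat.lt_floor_add_one x
      have h2 : x ^ (3:ℕ) < (((jN N : ℕ):ℝ) + 1) ^ (3:ℕ) :=
        pow_lt_pow_left₀ h1 hx0 (by norm_num)
      rw [hx3] at h2
      exact_mod_cast h2
  have hjN_tendsto : Tendsto jN atTop atTop := by
    refine tendsto_nat_floor_atTop.comp ?_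
    exact (tendsto_rpow_atTop (by norm_num : (0:ℝ) < (3:ℝ)⁻¹)).comp
      tendsto_natCast_atTop_atTop
  -- per-omega estimate
  filter_upwards [hae_sub] with ω hω
  have hbound : ∀ N : ℕ, 1 ≤ N →
      |S N ω / U N| ≤ |Y (jN N) ω| + 48 * M * ((jN N : ℕ):ℝ) ^ (3*γ-1) := by
    intro N hN
    obtain ⟨hj1, hj3N, hNj3⟩ := hjN_facts N hN
    set j : ℕ := jN N with hjdef
    have hjpos : (0:ℝ) < (j:ℝ) := by exact_mod_cast hj1
    have hj3_1 : 1 ≤ j^3 := Nat.one_le_iff_ne_zero.mpr (by positivity)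
    have hUN_pos := hU_pos N hN
    have hUj_pos := hU_pos (j^3) hj3_1
    -- split the sum
    have hIcc : ∀ m : ℕ, Finset.Icc 1 m = Finset.Ioc 0 m := by
      intro m; ext k; simp [Nat.lt_iff_add_one_le]
    have hsplit : S N ω = S (j^3) ω + ∑ k ∈ Finset.Ioc (j^3) N, u k * X k ω := by
      rw [hSdef]
      simp only [hIcc]
      exact (Finset.sum_Ioc_consecutive _ (Nat.zero_le _) hj3N).symm
    -- bound the gap sum
    have hgap : |∑ k ∈ Finset.Ioc (j^3) N, u k * X k ω|
        ≤ 6 * (j:ℝ)^(2:ℕ) * (8 * (j:ℝ)^(3*γ) * M) := by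
      have hterm : ∀ k ∈ Finset.Ioc (j^3) N, |u k * X k ω| ≤ 8 * (j:ℝ)^(3*γ) * M := by
        intro k hk
        rcases Finset.mem_Ioc.mp hk with ⟨hk1, hk2⟩
        have hk1' : 1 ≤ k := le_trans hj3_1 (le_of_lt hk1)
        have hu1 := (hu k hk1').1
        have huk : u k ≤ 8 * (j:ℝ)^(3*γ) := by
          refine le_trans (hu k hk1').2 ?_
          have hkle : (k:ℝ) ≤ ((j+1:ℕ):ℝ)^(3:ℕ) := by
            exact_mod_cast le_of_lt (lt_of_le_of_lt hk2 hNj3)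
          calc (k:ℝ)^γ ≤ (((j+1:ℕ):ℝ)^(3:ℕ))^γ :=
                Real.rpow_le_rpow (Nat.cast_nonneg _) hkle hγ0
            _ ≤ ((2*(j:ℝ))^(3:ℕ))^γ := by
                refine Real.rpow_le_rpow (by positivity) ?_ hγ0
                refine pow_le_pow_left₀ (Nat.cast_nonneg _) ?_ 3
                have hj1R : (1:ℝ) ≤ (j:ℝ) := by exact_mod_cast hj1
                push_cast
                linarith
            _ = (8 * (j:ℝ)^(3:ℕ))^γ := by
                rw [show (2*(j:ℝ))^(3:ℕ) = 8*(j:ℝ)^(3:ℕ) by ring]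
            _ = 8^γ * ((j:ℝ)^(3:ℕ))^γ := Real.mul_rpow (by norm_num) (by positivity)
            _ ≤ 8 * (j:ℝ)^(3*γ) := by
                have h8 : (8:ℝ)^γ ≤ 8 := by
                  calc (8:ℝ)^γ ≤ (8:ℝ)^(1:ℝ) :=
                    Real.rpow_le_rpow_of_exponent_le (by norm_num) (by linarith)
                    _ = 8 := Real.rpow_one 8
                have hj3g : ((j:ℝ)^(3:ℕ))^γ = (j:ℝ)^(3*γ) := by
                  rw [← Real.rpow_natCast (j:ℝ) 3, ← Real.rpow_mul hjpos.le]
                  norm_num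
                rw [hj3g]
                exact mul_le_mul_of_nonneg_right h8 (Real.rpow_nonneg hjpos.le _)
        rw [abs_mul, abs_of_nonneg (zero_le_one.trans hu1)]
        calc u k * |X k ω| ≤ u k * M := mul_le_mul_of_nonneg_left (hbdd' k ω)
              (zero_le_one.trans hu1)
          _ ≤ 8 * (j:ℝ)^(3*γ) * M := mul_le_mul_of_nonneg_right huk hM
      have hcard : ((Finset.Ioc (j^3) N).card : ℝ) ≤ 6 * (j:ℝ)^(2:ℕ) := by
        rw [Nat.card_Ioc]
        have hNle : N ≤ j^3 + 6*j^2 := by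
          have hexp : (j+1)^3 = j^3 + 3*j^2 + 3*j + 1 := by ring
          have hjj : j ≤ j^2 := by nlinarith
          omega
        have : N - j^3 ≤ 6*j^2 := by omega
        calc ((N - j^3 : ℕ):ℝ) ≤ ((6*j^2 : ℕ):ℝ) := by exact_mod_cast this
          _ = 6 * (j:ℝ)^(2:ℕ) := by push_cast; ring
      calc |∑ k ∈ Finset.Ioc (j^3) N, u k * X k ω|
          ≤ ∑ k ∈ Finset.Ioc (j^3) N, |u k * X k ω| := Finset.abs_sum_le_sum_abs _ _
        _ ≤ ∑ _k ∈ Finset.Ioc (j^3) N, (8 * (j:ℝ)^(3*γ) * M) := Finset.sum_le_sum hterm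
        _ = ((Finset.Ioc (j^3) N).card : ℝ) * (8 * (j:ℝ)^(3*γ) * M) := by
            rw [Finset.sum_const, nsmul_eq_mul]
        _ ≤ 6 * (j:ℝ)^(2:ℕ) * (8 * (j:ℝ)^(3*γ) * M) := by
            refine mul_le_mul_of_nonneg_right hcard (by positivity)
    -- combine
    have hj3R : ((j^3:ℕ):ℝ) ≤ U N := le_trans (by exact_mod_cast hj3N) (hU_ge N)
    have hj3R_pos : (0:ℝ) < ((j^3:ℕ):ℝ) := by positivity
    calc |S N ω / U N| = |S N ω| / U N := by rw [abs_div, abs_of_pos hUN_pos]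
      _ ≤ (|S (j^3) ω| + |∑ k ∈ Finset.Ioc (j^3) N, u k * X k ω|) / U N := by
          gcongr
          rw [hsplit]
          exact abs_add_le _ _
      _ = |S (j^3) ω| / U N + |∑ k ∈ Finset.Ioc (j^3) N, u k * X k ω| / U N := by
          rw [add_div]
      _ ≤ |S (j^3) ω| / U (j^3) + (6 * (j:ℝ)^(2:ℕ) * (8 * (j:ℝ)^(3*γ) * M)) / ((j^3:ℕ):ℝ) := by
          gcongr
          all_goals first
            | exact hU_mono hj3N
            | exact hj3R
            | exact le_trans hj3R_pos.le hj3R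
            | exact hgap
      _ = |Y j ω| + 48 * M * ((j:ℕ):ℝ) ^ (3*γ-1) := by
          rw [hYdef]
          simp only
          rw [abs_div, abs_of_pos hUj_pos]
          congr 1
          have hcast : ((j^3:ℕ):ℝ) = (j:ℝ)^(3:ℕ) := by push_cast; ring
          rw [hcast, Real.rpow_sub hjpos]
          have hj3g : (j:ℝ)^(3*γ) = (j:ℝ)^(3*γ) := rfl
          have h3 : (j:ℝ) ^ (1:ℝ) = (j:ℝ) := Real.rpow_one _
          have hne3 : (j:ℝ)^(3:ℕ) ≠ 0 := by positivity
          have hne1 : (j:ℝ) ^ (1:ℝ) ≠ 0 := by rw [h3]; exact hjpos.ne'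
          field_simp
          rw [h3]
          ring
  -- conclude by squeezing
  have hterm2 : Tendsto (fun N => 48 * M * ((jN N : ℕ):ℝ) ^ (3*γ-1)) atTop (nhds 0) := by
    have h1 : Tendsto (fun j : ℕ => ((j:ℕ):ℝ) ^ (3*γ-1)) atTop (nhds 0) := by
      have := (tendsto_rpow_neg_atTop (by linarith : (0:ℝ) < 1 - 3*γ)).comp
        tendsto_natCast_atTop_atTop (α := ℕ)
      simpa [Function.comp_def, show -(1-3*γ) = 3*γ-1 by ring] using this
    have := (h1.comp hjN_tendsto).const_mul (48*M)
    simpa [Function.comp_def, mul_assoc] using this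
  have hterm1 : Tendsto (fun N => |Y (jN N) ω|) atTop (nhds 0) := by
    have := (hω.comp hjN_tendsto).abs
    simpa [Function.comp_def] using this
  have hg : Tendsto (fun N => |Y (jN N) ω| + 48 * M * ((jN N : ℕ):ℝ) ^ (3*γ-1))
      atTop (nhds 0) := by
    simpa using hterm1.add hterm2
  refine squeeze_zero_norm' ?_ hg
  filter_upwards [eventually_ge_atTop 1] with N hN
  simpa only [Real.norm_eq_abs] using hbound N hN
end
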